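/- arXiv:2301.02082 — 8 statements merged into one kernel-verified Lean document; each statement's English description precedes it below -/
import Mathlib

section
/- Let n ≥ 1 and m ∈ ℕ. The number of permutations σ of Fin (2n) satisfying L(σ) = 2((m : ℤ) − n + 1) equals 2n · A(2n−1, m), where A denotes the Eulerian number. Equivalently, the proportion of permutations σ of Fin (2n) (i.e., of height orderings of the 2n interior edges in a random book embedding of K_{2n}) for which the linking number L(σ)/2 of two disjoint strictly increasing n-cycles equals ℓ is A(2n−1, n+ℓ−1)/(2n−1)!. -/
/-- The Eulerian number `A(n, m)`: the number of permutations of `Fin n` with exactly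
`m` ascents, where an ascent of `σ` is an index `k` with `k + 1 < n` and `σ k < σ (k+1)`. -/
def eulerian (n m : ℕ) : ℕ :=
  (Finset.univ.filter (fun σ : Equiv.Perm (Fin n) =>
    (Finset.univ.filter (fun k : Fin n =>
      ∃ h : (k : ℕ) + 1 < n, σ k < σ ⟨(k : ℕ) + 1, h⟩)).card = m)).card

/-- The cyclic signed sum `L(σ) = ∑_j ε_j` where `ε_j = 1` if `σ j < σ (j+1)` and
`ε_j = -1` otherwise, with `j + 1` computed cyclically in `Fin N`. -/
def cyclicSignedSum {N : ℕ} (σ : Equiv.Perm (Fin N)) : ℤ :=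
  ∑ j : Fin N,
    if σ j < σ ⟨((j : ℕ) + 1) % N, Nat.mod_lt _ j.pos⟩ then (1 : ℤ) else -1

open Finset Equiv

private lemma fin_succ_eq {N : ℕ} [NeZero N] (j : Fin N) :
    (⟨((j : ℕ) + 1) % N, Nat.mod_lt _ j.pos⟩ : Fin N) = j + 1 := by
  apply Fin.ext
  simp only [Fin.add_def, Fin.val_one']
  conv_rhs => rw [Nat.add_mod, Nat.mod_mod_of_dvd _ dvd_rfl]
  simp [Nat.mod_mod]

/-- number of cyclic ascents -/
private def cycAsc {N : ℕ} [NeZero N] (σ : Equiv.Perm (Fin N)) : ℕ :=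
  (univ.filter (fun j : Fin N => σ j < σ (j + 1))).card

private lemma css_eq_cycAsc {N : ℕ} [NeZero N] (σ : Equiv.Perm (Fin N)) :
    cyclicSignedSum σ = 2 * (cycAsc σ : ℤ) - N := by
  unfold cyclicSignedSum cycAsc
  have h1 : ∀ j : Fin N,
      (if σ j < σ ⟨((j : ℕ) + 1) % N, Nat.mod_lt _ j.pos⟩ then (1 : ℤ) else -1)
      = 2 * (if σ j < σ (j + 1) then (1 : ℤ) else 0) - 1 := by
    intro j
    rw [fin_succ_eq]
    split <;> norm_num
  rw [Finset.sum_congr rfl (fun j _ => h1 j), Finset.sum_sub_distrib,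
    ← Finset.mul_sum]
  simp [Finset.sum_ite_eq, Finset.sum_boole, Fintype.card_fin]

private lemma cycAsc_addRight {N : ℕ} [NeZero N] (σ : Equiv.Perm (Fin N)) (c : Fin N) :
    cycAsc ((Equiv.addRight c).trans σ) = cycAsc σ := by
  unfold cycAsc
  apply Finset.card_nbij' (fun j => j + c) (fun j => j - c)
  · intro a ha
    simp only [Finset.mem_coe, mem_filter] at ha ⊢
    simp only [Finset.mem_coe, mem_filter, mem_univ, true_and, Equiv.trans_apply, Equiv.coe_addRight] at ha ⊢
    rwa [← add_right_comm]
  · intro a ha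
    simp only [Finset.mem_coe, mem_filter] at ha ⊢
    simp only [Finset.mem_coe, mem_filter, mem_univ, true_and, Equiv.trans_apply, Equiv.coe_addRight] at ha ⊢
    rwa [sub_add_cancel, add_right_comm, sub_add_cancel]
  · intro a _; simp
  · intro a _; simp

/-- extend a permutation of `Fin M` to `Fin (M+1)` fixing the last element -/
private def extPerm {M : ℕ} (τ : Equiv.Perm (Fin M)) : Equiv.Perm (Fin (M + 1)) where
  toFun i := if h : i = Fin.last M then Fin.last M else (τ (i.castPred h)).castSucc
  invFun i := if h : i = Fin.last M then Fin.last M else (τ.symm (i.castPred h)).castSucc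
  left_inv i := by
    by_cases h : i = Fin.last M
    · simp [h]
    · simp only [dif_neg h, dif_neg (Fin.castSucc_lt_last _).ne, Fin.castPred_castSucc,
        Equiv.symm_apply_apply, Fin.castSucc_castPred]
  right_inv i := by
    by_cases h : i = Fin.last M
    · simp [h]
    · simp only [dif_neg h, dif_neg (Fin.castSucc_lt_last _).ne, Fin.castPred_castSucc,
        Equiv.apply_symm_apply, Fin.castSucc_castPred]

@[simp] private lemma extPerm_last {M : ℕ} (τ : Equiv.Perm (Fin M)) :
    extPerm τ (Fin.last M) = Fin.last M := dif_pos rfl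

@[simp] private lemma extPerm_castSucc {M : ℕ} (τ : Equiv.Perm (Fin M)) (k : Fin M) :
    extPerm τ k.castSucc = (τ k).castSucc := by
  show dite _ _ _ = _
  rw [dif_neg (Fin.castSucc_lt_last _).ne, Fin.castPred_castSucc]

/-- restrict a permutation of `Fin (M+1)` fixing the last element -/
private noncomputable def resPerm {M : ℕ} (σ : Equiv.Perm (Fin (M + 1)))
    (h : σ (Fin.last M) = Fin.last M) : Equiv.Perm (Fin M) :=
  Equiv.ofBijective
    (fun k => (σ k.castSucc).castPred (by
      intro hc
      exact absurd (σ.injective (hc.trans h.symm)) (Fin.castSucc_lt_last k).ne))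
    (Finite.injective_iff_bijective.mp (by
      intro a b hab
      have := congrArg Fin.castSucc hab
      rw [Fin.castSucc_castPred, Fin.castSucc_castPred] at this
      exact Fin.castSucc_injective _ (σ.injective this)))

private lemma resPerm_apply {M : ℕ} (σ : Equiv.Perm (Fin (M + 1)))
    (h : σ (Fin.last M) = Fin.last M) (k : Fin M) :
    (resPerm σ h k).castSucc = σ k.castSucc :=
  Fin.castSucc_castPred _ (fun hc =>
    absurd (σ.injective (hc.trans h.symm)) (Fin.castSucc_lt_last k).ne)

private lemma extPerm_resPerm {M : ℕ} (σ : Equiv.Perm (Fin (M + 1)))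
    (h : σ (Fin.last M) = Fin.last M) : extPerm (resPerm σ h) = σ := by
  apply Equiv.ext
  intro i
  by_cases hi : i = Fin.last M
  · simp [hi, h]
  · rw [← Fin.castSucc_castPred i hi, extPerm_castSucc, resPerm_apply]

private lemma resPerm_ext {M : ℕ} (σ σ' : Equiv.Perm (Fin (M + 1)))
    (h : σ (Fin.last M) = Fin.last M) (h' : σ' (Fin.last M) = Fin.last M)
    (he : σ = σ') : resPerm σ h = resPerm σ' h' := by subst he; rfl

/-- linear ascent count, matching `eulerian` -/
private def ascCount {M : ℕ} (τ : Equiv.Perm (Fin M)) : ℕ :=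
  (univ.filter (fun k : Fin M =>
    ∃ h : (k : ℕ) + 1 < M, τ k < τ ⟨(k : ℕ) + 1, h⟩)).card

private lemma csucc_add_one {M : ℕ} (k : Fin (M + 1)) (h : (k : ℕ) + 1 < M + 1) :
    (k.castSucc : Fin (M + 2)) + 1 = Fin.castSucc ⟨(k : ℕ) + 1, h⟩ := by
  apply Fin.ext
  simp [Fin.add_def, Nat.mod_eq_of_lt (by omega : (k : ℕ) + 1 < M + 2)]

private lemma csucc_last_add_one {M : ℕ} :
    (Fin.castSucc (Fin.last M) : Fin (M + 2)) + 1 = Fin.last (M + 1) := by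
  apply Fin.ext
  simp [Fin.add_def, Nat.mod_eq_of_lt (by omega : M + 1 < M + 2)]

private lemma cycAsc_extPerm {M : ℕ} (τ : Equiv.Perm (Fin (M + 1))) :
    cycAsc (extPerm τ) = ascCount τ + 1 := by
  unfold cycAsc ascCount
  rw [Finset.card_filter, Finset.card_filter, Fin.sum_univ_castSucc, Fin.sum_univ_castSucc,
    Fin.sum_univ_castSucc (n := M)]
  have hlast0 : (if extPerm τ (Fin.last (M + 1)) < extPerm τ (Fin.last (M + 1) + 1)
      then 1 else 0) = 0 := by
    rw [if_neg]
    rw [extPerm_last]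
    exact fun hlt => absurd (Fin.le_last _) (not_le.mpr hlt)
  have htop : (if extPerm τ (Fin.castSucc (Fin.last M))
        < extPerm τ ((Fin.castSucc (Fin.last M)) + 1) then 1 else 0) = 1 := by
    rw [csucc_last_add_one, extPerm_castSucc, extPerm_last, if_pos (Fin.castSucc_lt_last _)]
  have htop' : (if ∃ h : (Fin.last M : ℕ) + 1 < M + 1,
        τ (Fin.last M) < τ ⟨(Fin.last M : ℕ) + 1, h⟩ then 1 else 0) = 0 := by
    rw [if_neg]
    rintro ⟨h, -⟩
    simp [Fin.val_last] at h
  have hmid : ∀ k : Fin M,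
      (if extPerm τ (Fin.castSucc (Fin.castSucc k))
        < extPerm τ ((Fin.castSucc (Fin.castSucc k)) + 1) then 1 else 0)
      = (if ∃ h : ((Fin.castSucc k : Fin (M+1)) : ℕ) + 1 < M + 1,
          τ (Fin.castSucc k) < τ ⟨((Fin.castSucc k : Fin (M+1)) : ℕ) + 1, h⟩
          then 1 else 0) := by
    intro k
    have hk : ((Fin.castSucc k : Fin (M+1)) : ℕ) + 1 < M + 1 := by
      simp only [Fin.coe_castSucc]; omega
    rw [csucc_add_one _ hk, extPerm_castSucc, extPerm_castSucc]
    congr 1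
    rw [eq_iff_iff, Fin.castSucc_lt_castSucc_iff]
    exact ⟨fun hlt => ⟨hk, hlt⟩, fun hh => hh.2⟩
  rw [hlast0, htop, htop', Finset.sum_congr rfl (fun k _ => hmid k)]

private noncomputable def jOf {M : ℕ} (σ : Equiv.Perm (Fin (M + 2))) : Fin (M + 2) :=
  Fin.last (M + 1) - σ.symm (Fin.last (M + 1))

private lemma fixLast {M : ℕ} (σ : Equiv.Perm (Fin (M + 2))) :
    ((Equiv.subRight (jOf σ)).trans σ) (Fin.last (M + 1)) = Fin.last (M + 1) := by
  show σ (Fin.last (M + 1) - jOf σ) = Fin.last (M + 1)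
  rw [jOf, sub_sub_cancel, Equiv.apply_symm_apply]

private noncomputable def tauOf {M : ℕ} (σ : Equiv.Perm (Fin (M + 2))) :
    Equiv.Perm (Fin (M + 1)) :=
  resPerm ((Equiv.subRight (jOf σ)).trans σ) (fixLast σ)

private def fwd {M : ℕ} (p : Fin (M + 2) × Equiv.Perm (Fin (M + 1))) :
    Equiv.Perm (Fin (M + 2)) :=
  (Equiv.addRight p.1).trans (extPerm p.2)

private lemma extPerm_tauOf {M : ℕ} (σ : Equiv.Perm (Fin (M + 2))) :
    extPerm (tauOf σ) = (Equiv.subRight (jOf σ)).trans σ :=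
  extPerm_resPerm _ _

private lemma subRight_eq_addRight {M : ℕ} (j : Fin (M + 2)) :
    (Equiv.subRight j : Equiv.Perm (Fin (M + 2))) = Equiv.addRight (-j) := by
  apply Equiv.ext; intro x; simp [sub_eq_add_neg]

private lemma cycAsc_tauOf {M : ℕ} (σ : Equiv.Perm (Fin (M + 2))) :
    cycAsc σ = ascCount (tauOf σ) + 1 := by
  have h1 : cycAsc ((Equiv.subRight (jOf σ)).trans σ) = cycAsc σ := by
    rw [subRight_eq_addRight, cycAsc_addRight]
  rw [← h1, ← extPerm_tauOf, cycAsc_extPerm]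

private lemma fwd_bwd {M : ℕ} (σ : Equiv.Perm (Fin (M + 2))) :
    fwd (jOf σ, tauOf σ) = σ := by
  unfold fwd
  rw [extPerm_tauOf]
  apply Equiv.ext
  intro x
  show σ (x + jOf σ - jOf σ) = σ x
  rw [add_sub_cancel_right]

private lemma jOf_fwd {M : ℕ} (j : Fin (M + 2)) (τ : Equiv.Perm (Fin (M + 1))) :
    jOf (fwd (j, τ)) = j := by
  have hsymm : (fwd (j, τ)).symm (Fin.last (M + 1)) = Fin.last (M + 1) - j := by
    apply (fwd (j, τ)).injective
    rw [Equiv.apply_symm_apply]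
    symm
    show extPerm τ (Fin.last (M + 1) - j + j) = Fin.last (M + 1)
    rw [sub_add_cancel, extPerm_last]
  rw [jOf, hsymm, sub_sub_cancel]

private lemma tauOf_fwd {M : ℕ} (j : Fin (M + 2)) (τ : Equiv.Perm (Fin (M + 1))) :
    tauOf (fwd (j, τ)) = τ := by
  have heq : (Equiv.subRight (jOf (fwd (j, τ)))).trans (fwd (j, τ)) = extPerm τ := by
    rw [jOf_fwd]
    apply Equiv.ext
    intro x
    show extPerm τ (x - j + j) = extPerm τ x
    rw [sub_add_cancel]
  rw [tauOf, resPerm_ext _ (extPerm τ) _ (extPerm_last τ) heq]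
  apply Equiv.ext
  intro k
  apply Fin.castSucc_injective
  rw [resPerm_apply, extPerm_castSucc]

private lemma key (N m : ℕ) (hN : 2 ≤ N) :
    (Finset.univ.filter (fun σ : Equiv.Perm (Fin N) =>
      cyclicSignedSum σ = 2 * ((m : ℤ) + 1) - N)).card = N * eulerian (N - 1) m := by
  obtain ⟨M, rfl⟩ : ∃ M, N = M + 2 := ⟨N - 2, by omega⟩
  have hcond : ∀ σ : Equiv.Perm (Fin (M + 2)),
      (cyclicSignedSum σ = 2 * ((m : ℤ) + 1) - (M + 2 : ℕ)) ↔ cycAsc σ = m + 1 := by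
    intro σ
    rw [css_eq_cycAsc]
    constructor <;> intro h <;> omega
  have hfe : (Finset.univ.filter (fun σ : Equiv.Perm (Fin (M + 2)) =>
      cyclicSignedSum σ = 2 * ((m : ℤ) + 1) - (M + 2 : ℕ)))
      = Finset.univ.filter (fun σ => cycAsc σ = m + 1) := by
    apply Finset.filter_congr
    intro σ _
    exact hcond σ
  rw [hfe]
  have hcard : (M + 2) * eulerian (M + 1) m
      = ((univ : Finset (Fin (M + 2))) ×ˢ
          (univ.filter (fun τ : Equiv.Perm (Fin (M + 1)) => ascCount τ = m))).card := by
    rw [Finset.card_product, Finset.card_univ, Fintype.card_fin]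
    rfl
  show _ = (M + 2) * eulerian (M + 1) m
  rw [hcard]
  apply Finset.card_nbij' (fun σ => (jOf σ, tauOf σ)) fwd
  · intro σ hσ
    simp only [Finset.mem_coe, mem_filter, mem_univ, true_and] at hσ
    simp only [Finset.mem_coe, Finset.mem_product, mem_univ, true_and, mem_filter]
    have := cycAsc_tauOf σ
    omega
  · rintro ⟨j, τ⟩ hp
    simp only [Finset.mem_coe, Finset.mem_product, mem_univ, true_and, mem_filter] at hp
    simp only [Finset.mem_coe, mem_filter, mem_univ, true_and]
    have := cycAsc_tauOf (fwd (j, τ))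
    rw [tauOf_fwd] at this
    omega
  · intro σ _
    exact fwd_bwd σ
  · rintro ⟨j, τ⟩ _
    dsimp only
    rw [jOf_fwd, tauOf_fwd]


/-- The number of permutations `σ` of `Fin (2n)` with `L σ = 2 (m - n + 1)` equals
`2n · A(2n - 1, m)`; equivalently, the proportion of height orderings of the `2n` interior
edges for which the linking number of two disjoint strictly increasing `n`-cycles in a
random book embedding of `K_{2n}` equals `ℓ` is `A(2n-1, n+ℓ-1)/(2n-1)!`. -/
theorem count_perms_with_linking (n m : ℕ) (hn : 1 ≤ n) :
    (Finset.univ.filter (fun σ : Equiv.Perm (Fin (2 * n)) =>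
      cyclicSignedSum σ = 2 * ((m : ℤ) - n + 1))).card
    = 2 * n * eulerian (2 * n - 1) m := by
  have h := key (2 * n) m (by omega)
  have hc : 2 * ((m : ℤ) - n + 1) = 2 * ((m : ℤ) + 1) - (2 * n : ℕ) := by
    push_cast; ring
  rw [hc]
  exact h
end

section
/- Let n ≥ 1 and m ∈ ℕ. The number of permutations σ of Fin (2n) that fix the top element (σ(2n−1) = 2n−1) and satisfy L(σ) = 2((m : ℤ) − n + 1) equals the Eulerian number A(2n−1, m). -/
open Finset Equiv

/-- Extension of a permutation of `Fin K` to `Fin (K+1)`, fixing the last element. -/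
def extL {K : ℕ} (τ : Equiv.Perm (Fin K)) : Equiv.Perm (Fin (K + 1)) where
  toFun j := if h : (j : ℕ) < K then (τ ⟨j, h⟩).castSucc else j
  invFun j := if h : (j : ℕ) < K then (τ.symm ⟨j, h⟩).castSucc else j
  left_inv j := by
    by_cases h : (j : ℕ) < K
    · simp only [dif_pos h]
      rw [dif_pos (by simpa using (τ ⟨j, h⟩).isLt)]
      exact Fin.ext (by simp)
    · simp only [dif_neg h]
  right_inv j := by
    by_cases h : (j : ℕ) < K
    · simp only [dif_pos h]
      rw [dif_pos (by simpa using (τ.symm ⟨j, h⟩).isLt)]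
      exact Fin.ext (by simp)
    · simp only [dif_neg h]

lemma extL_apply_lt {K : ℕ} (τ : Equiv.Perm (Fin K)) (j : Fin (K + 1)) (h : (j : ℕ) < K) :
    extL τ j = (τ ⟨j, h⟩).castSucc := dif_pos h

lemma extL_apply_last {K : ℕ} (τ : Equiv.Perm (Fin K)) :
    extL τ (Fin.last K) = Fin.last K := dif_neg (lt_irrefl K)

/-- Restriction of a permutation of `Fin (K+1)` fixing the last element. -/
def resL {K : ℕ} (σ : Equiv.Perm (Fin (K + 1))) (hσ : σ (Fin.last K) = Fin.last K) :
    Equiv.Perm (Fin K) where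
  toFun k := ⟨(σ k.castSucc : ℕ), by
    have h2 : ((σ k.castSucc : Fin (K+1)) : ℕ) ≠ K := by
      intro hc
      have h3 : σ k.castSucc = Fin.last K := Fin.ext hc
      have h4 : k.castSucc = Fin.last K := σ.injective (h3.trans hσ.symm)
      have := congrArg Fin.val h4
      simp only [Fin.coe_castSucc, Fin.val_last] at this
      have := k.isLt
      omega
    have := (σ k.castSucc).isLt
    omega⟩
  invFun k := ⟨(σ.symm k.castSucc : ℕ), by
    have hσ' : σ.symm (Fin.last K) = Fin.last K := by
      conv_lhs => rw [← hσ]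
      exact σ.symm_apply_apply _
    have h2 : ((σ.symm k.castSucc : Fin (K+1)) : ℕ) ≠ K := by
      intro hc
      have h3 : σ.symm k.castSucc = Fin.last K := Fin.ext hc
      have h4 : k.castSucc = Fin.last K := σ.symm.injective (h3.trans hσ'.symm)
      have := congrArg Fin.val h4
      simp only [Fin.coe_castSucc, Fin.val_last] at this
      have := k.isLt
      omega
    have := (σ.symm k.castSucc).isLt
    omega⟩
  left_inv k := by
    apply Fin.ext
    simp only
    have hcast : ∀ (x : Fin (K+1)) (hx : (x : ℕ) < K),
        Fin.castSucc (⟨(x : ℕ), hx⟩ : Fin K) = x := fun x hx => Fin.ext (by simp)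
    rw [hcast]
    simp
  right_inv k := by
    apply Fin.ext
    simp only
    have hcast : ∀ (x : Fin (K+1)) (hx : (x : ℕ) < K),
        Fin.castSucc (⟨(x : ℕ), hx⟩ : Fin K) = x := fun x hx => Fin.ext (by simp)
    rw [hcast]
    simp

lemma resL_apply {K : ℕ} (σ : Equiv.Perm (Fin (K + 1))) (hσ : σ (Fin.last K) = Fin.last K)
    (k : Fin K) : ((resL σ hσ k : Fin K) : ℕ) = ((σ k.castSucc : Fin (K+1)) : ℕ) := rfl

lemma extL_resL {K : ℕ} (σ : Equiv.Perm (Fin (K + 1))) (hσ : σ (Fin.last K) = Fin.last K) :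
    extL (resL σ hσ) = σ := by
  apply Equiv.ext
  intro j
  by_cases h : (j : ℕ) < K
  · rw [extL_apply_lt _ j h]
    apply Fin.ext
    rw [Fin.coe_castSucc, resL_apply]
    have hc : Fin.castSucc (⟨(j : ℕ), h⟩ : Fin K) = j := Fin.ext (by simp)
    rw [hc]
  · have hj : j = Fin.last K := Fin.ext (by have := j.isLt; simp only [Fin.val_last]; omega)
    rw [hj, extL_apply_last]
    exact hσ.symm

lemma resL_extL {K : ℕ} (τ : Equiv.Perm (Fin K)) (h : extL τ (Fin.last K) = Fin.last K) :
    resL (extL τ) h = τ := by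
  apply Equiv.ext
  intro k
  apply Fin.ext
  rw [resL_apply]
  rw [extL_apply_lt _ _ (by simpa using k.isLt)]
  have hc : (⟨((k.castSucc : Fin (K+1)) : ℕ), by simpa using k.isLt⟩ : Fin K) = k :=
    Fin.ext (by simp)
  rw [hc]
  simp

lemma cyclic_extL {K : ℕ} (hK : 1 ≤ K) (τ : Equiv.Perm (Fin K)) :
    cyclicSignedSum (extL τ) =
      2 * ((Finset.univ.filter (fun k : Fin K =>
        ∃ h : (k : ℕ) + 1 < K, τ k < τ ⟨(k : ℕ) + 1, h⟩)).card : ℤ) - K + 1 := by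
  unfold cyclicSignedSum
  rw [Fin.sum_univ_castSucc]
  have hlast : (if extL τ (Fin.last K) <
      extL τ ⟨(((Fin.last K : Fin (K+1)) : ℕ) + 1) % (K + 1), Nat.mod_lt _ (Fin.last K).pos⟩
      then (1 : ℤ) else -1) = -1 := by
    rw [extL_apply_last, if_neg (Fin.le_last _).not_gt]
  rw [hlast]
  have key : ∀ j : Fin K,
      (if extL τ j.castSucc <
        extL τ ⟨(((j.castSucc : Fin (K+1)) : ℕ) + 1) % (K + 1), Nat.mod_lt _ j.castSucc.pos⟩
        then (1 : ℤ) else -1)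
      = ((if (∃ h : (j : ℕ) + 1 < K, τ j < τ ⟨(j : ℕ) + 1, h⟩) then (1 : ℤ) else -1)
        + (if (j : ℕ) = K - 1 then 2 else 0)) := by
    intro j
    have h1 : extL τ j.castSucc = (τ j).castSucc := by
      rw [extL_apply_lt τ _ (by simpa using j.isLt)]
      have hc : (⟨((j.castSucc : Fin (K+1)) : ℕ), by simpa using j.isLt⟩ : Fin K) = j :=
        Fin.ext (by simp)
      rw [hc]
    by_cases h : (j : ℕ) + 1 < K
    · have h2 : extL τ ⟨(((j.castSucc : Fin (K+1)) : ℕ) + 1) % (K + 1),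
          Nat.mod_lt _ j.castSucc.pos⟩ = (τ ⟨(j : ℕ) + 1, h⟩).castSucc := by
        rw [extL_apply_lt τ _ (show _ < K from by
          simp only [Fin.coe_castSucc]
          rw [Nat.mod_eq_of_lt (by omega)]
          exact h)]
        congr 2
        apply Fin.ext
        simp only [Fin.coe_castSucc]
        rw [Nat.mod_eq_of_lt (by omega)]
      rw [h1, h2, if_neg (show ¬(j : ℕ) = K - 1 by omega)]
      simp only [Fin.castSucc_lt_castSucc_iff, add_zero]
      rcases Classical.em (τ j < τ ⟨(j : ℕ) + 1, h⟩) with hc | hc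
      · rw [if_pos hc, if_pos ⟨h, hc⟩]
      · rw [if_neg hc, if_neg (by intro hex; exact hc hex.choose_spec)]
    · have hj : (j : ℕ) = K - 1 := by have := j.isLt; omega
      have h2 : extL τ ⟨(((j.castSucc : Fin (K+1)) : ℕ) + 1) % (K + 1),
          Nat.mod_lt _ j.castSucc.pos⟩ = Fin.last K := by
        rw [show (⟨(((j.castSucc : Fin (K+1)) : ℕ) + 1) % (K + 1),
            Nat.mod_lt _ j.castSucc.pos⟩ : Fin (K+1)) = Fin.last K from Fin.ext (by
          simp only [Fin.coe_castSucc, Fin.val_last]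
          have := j.isLt
          rw [Nat.mod_eq_of_lt (by omega)]
          omega)]
        exact extL_apply_last τ
      rw [h1, h2, if_pos (Fin.castSucc_lt_last _),
        if_neg (show ¬∃ h' : (j : ℕ) + 1 < K, τ j < τ ⟨(j : ℕ) + 1, h'⟩ from
          fun ⟨h', _⟩ => absurd h' h), if_pos hj]
      norm_num
  rw [Finset.sum_congr rfl (fun j _ => key j), Finset.sum_add_distrib]
  have hA : ∑ j : Fin K, (if (∃ h : (j : ℕ) + 1 < K, τ j < τ ⟨(j : ℕ) + 1, h⟩)
      then (1 : ℤ) else -1)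
      = 2 * ((Finset.univ.filter (fun k : Fin K =>
        ∃ h : (k : ℕ) + 1 < K, τ k < τ ⟨(k : ℕ) + 1, h⟩)).card : ℤ) - K := by
    have step : ∀ j : Fin K, (if (∃ h : (j : ℕ) + 1 < K, τ j < τ ⟨(j : ℕ) + 1, h⟩)
        then (1 : ℤ) else -1)
        = 2 * (if (∃ h : (j : ℕ) + 1 < K, τ j < τ ⟨(j : ℕ) + 1, h⟩)
        then (1 : ℤ) else 0) - 1 := by
      intro j; split_ifs <;> ring
    rw [Finset.sum_congr rfl (fun j _ => step j), Finset.sum_sub_distrib,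
      ← Finset.mul_sum, Finset.sum_boole, Finset.sum_const, Finset.card_univ,
      Fintype.card_fin]
    push_cast
    ring
  have hB : ∑ j : Fin K, (if (j : ℕ) = K - 1 then (2 : ℤ) else 0) = 2 := by
    have hcongr : ∀ j : Fin K, (if (j : ℕ) = K - 1 then (2 : ℤ) else 0)
        = if j = (⟨K - 1, by omega⟩ : Fin K) then (2 : ℤ) else 0 := by
      intro j
      exact if_congr (by simp [Fin.ext_iff]) rfl rfl
    rw [Finset.sum_congr rfl (fun j _ => hcongr j),
      Finset.sum_ite_eq' Finset.univ (⟨K - 1, by omega⟩ : Fin K) (fun _ => (2 : ℤ))]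
    simp
  rw [hA, hB]
  ring

lemma key_count {K : ℕ} (hK : 1 ≤ K) (m : ℕ) :
    (Finset.univ.filter (fun σ : Equiv.Perm (Fin (K + 1)) =>
      σ (Fin.last K) = Fin.last K ∧ cyclicSignedSum σ = 2 * (m : ℤ) - K + 1)).card
    = eulerian K m := by
  unfold eulerian
  refine Finset.card_bij' (fun σ hσ => resL σ (Finset.mem_filter.mp hσ).2.1)
    (fun τ _ => extL τ) ?_ ?_ ?_ ?_
  · intro σ hσ
    obtain ⟨-, hfix, hsum⟩ := Finset.mem_filter.mp hσ
    rw [Finset.mem_filter]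
    refine ⟨Finset.mem_univ _, ?_⟩
    beta_reduce
    have h2 := cyclic_extL hK (resL σ (Finset.mem_filter.mp hσ).2.1)
    rw [extL_resL σ _] at h2
    omega
  case refine_2 =>
    intro τ hτ
    obtain ⟨-, hτ2⟩ := Finset.mem_filter.mp hτ
    rw [Finset.mem_filter]
    exact ⟨Finset.mem_univ _, extL_apply_last τ, by rw [cyclic_extL hK τ, hτ2]⟩
  case refine_3 =>
    intro σ hσ
    exact extL_resL σ _
  case refine_4 =>
    intro τ hτ
    exact resL_extL τ _

lemma cyclicSignedSum_congr {a b : ℕ} (h : a = b) (σ : Equiv.Perm (Fin a)) :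
    cyclicSignedSum ((finCongr h).permCongr σ) = cyclicSignedSum σ := by
  subst h
  congr 1

/-- The number of permutations `σ` of `Fin (2n)` fixing the top element
(`σ (2n - 1) = 2n - 1`) with `L σ = 2 (m - n + 1)` equals the Eulerian number
`A(2n - 1, m)`. -/
theorem count_top_fixing_perms_with_linking (n m : ℕ) (hn : 1 ≤ n) :
    (Finset.univ.filter (fun σ : Equiv.Perm (Fin (2 * n)) =>
      σ ⟨2 * n - 1, by omega⟩ = ⟨2 * n - 1, by omega⟩ ∧
      cyclicSignedSum σ = 2 * ((m : ℤ) - n + 1))).card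
    = eulerian (2 * n - 1) m := by
  obtain ⟨K, hK⟩ : ∃ K, 2 * n = K + 1 := ⟨2 * n - 1, by omega⟩
  have hK1 : 1 ≤ K := by omega
  rw [show eulerian (2 * n - 1) m = eulerian K m from by rw [show 2 * n - 1 = K by omega]]
  rw [← key_count hK1 m]
  apply Finset.card_equiv ((finCongr hK).permCongr)
  intro σ
  simp only [Finset.mem_filter, Finset.mem_univ, true_and]
  have e1 : (finCongr hK).symm (Fin.last K) = (⟨2 * n - 1, by omega⟩ : Fin (2 * n)) := by
    apply Fin.ext
    simp only [finCongr_symm_apply_coe, Fin.val_last]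
    omega
  have hnum : (2 * (m : ℤ) - K + 1) = 2 * ((m : ℤ) - n + 1) := by
    have hKi : (K : ℤ) = 2 * n - 1 := by omega
    rw [hKi]; ring
  have hfix_iff : (finCongr hK) (σ ⟨2 * n - 1, by omega⟩) = Fin.last K
      ↔ σ ⟨2 * n - 1, by omega⟩ = ⟨2 * n - 1, by omega⟩ := by
    rw [Equiv.apply_eq_iff_eq_symm_apply, e1]
  rw [cyclicSignedSum_congr hK σ, hnum, Equiv.permCongr_apply, e1, hfix_iff]
end

section
/- For every integer i ≥ 2, the identity 6 · ∑_{m=0}^{2i−2} ((m : ℤ) − (i − 1))² · A(2i−1, m) = (2i−1)! · i holds. Equivalently, the mean of the squared linking number of two disjoint monotonic cycles with i interior edges each, taken over all random book embeddings, is i/6. -/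
open Finset Equiv

namespace MSL

variable {n : ℕ}

def chi (n k : ℕ) (σ : Perm (Fin n)) : ℕ :=
  if h : k + 1 < n then (if σ ⟨k, Nat.lt_of_succ_lt h⟩ < σ ⟨k + 1, h⟩ then 1 else 0) else 0

lemma chi_le (k : ℕ) (σ : Perm (Fin n)) : chi n k σ ≤ if k + 1 < n then 1 else 0 := by
  unfold chi
  by_cases h : k + 1 < n
  · simp only [dif_pos h, if_pos h]; split <;> simp
  · simp [h]

lemma chi_eq_zero {k : ℕ} (h : ¬ k + 1 < n) (σ : Perm (Fin n)) : chi n k σ = 0 := by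
  unfold chi; simp [h]

-- generic swap bijection
lemma card_swap (p q : Perm (Fin n) → Prop) [DecidablePred p] [DecidablePred q]
    (a b : Fin n) (h : ∀ σ, p σ ↔ q (σ * Equiv.swap a b)) :
    (univ.filter p).card = (univ.filter q).card := by
  apply Finset.card_bij' (fun σ _ => σ * Equiv.swap a b) (fun σ _ => σ * Equiv.swap a b)
  · intro σ hσ
    simp only [mem_filter, mem_univ, true_and] at hσ ⊢
    exact (h σ).1 hσ
  · intro σ hσ
    simp only [mem_filter, mem_univ, true_and] at hσ ⊢
    rw [h]
    simpa [mul_assoc] using hσ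
  · intro σ _; simp [mul_assoc]
  · intro σ _; simp [mul_assoc]

lemma card_split (p q : Perm (Fin n) → Prop) [DecidablePred p] [DecidablePred q] :
    (univ.filter p).card
      = (univ.filter fun σ => p σ ∧ q σ).card + (univ.filter fun σ => p σ ∧ ¬ q σ).card := by
  rw [filter_filter (s := (univ : Finset (Perm (Fin n)))) (p := p) (q := q) |>.symm,
    (filter_filter (s := (univ : Finset (Perm (Fin n)))) (p := p) (q := fun σ => ¬ q σ)).symm,
    Finset.card_filter_add_card_filter_not]

lemma count_pair (a b : Fin n) (hab : a ≠ b) :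
    2 * (univ.filter fun σ : Perm (Fin n) => σ a < σ b).card = n.factorial := by
  have h1 : (univ.filter fun σ : Perm (Fin n) => σ a < σ b).card
      + (univ.filter fun σ : Perm (Fin n) => ¬ σ a < σ b).card
      = (univ : Finset (Perm (Fin n))).card :=
    Finset.card_filter_add_card_filter_not _
  have h2 : (univ.filter fun σ : Perm (Fin n) => ¬ σ a < σ b)
      = (univ.filter fun σ : Perm (Fin n) => σ b < σ a) := by
    apply filter_congr; intro σ _
    have : σ a ≠ σ b := fun hc => hab (σ.injective hc)
    constructor
    · intro h; exact lt_of_le_of_ne (not_lt.1 h) (Ne.symm this)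
    · intro h; exact not_lt.2 h.le
  have h3 : (univ.filter fun σ : Perm (Fin n) => σ b < σ a).card
      = (univ.filter fun σ : Perm (Fin n) => σ a < σ b).card := by
    apply card_swap _ _ a b
    intro σ; simp [Equiv.Perm.mul_apply]
  rw [h2, h3] at h1
  rw [two_mul, h1, card_univ, Fintype.card_perm, Fintype.card_fin]


lemma count_triple (a b c : Fin n) (hab : a ≠ b) (hac : a ≠ c) (hbc : b ≠ c) :
    6 * (univ.filter fun σ : Perm (Fin n) => σ a < σ b ∧ σ b < σ c).card = n.factorial := by
  have key : ∀ (x y : Fin n), x ≠ y → ∀ σ : Perm (Fin n), σ x ≠ σ y :=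
    fun x y hxy σ hc => hxy (σ.injective hc)
  have eqcard : ∀ (p q : Perm (Fin n) → Prop) [DecidablePred p] [DecidablePred q],
      (∀ σ, p σ ↔ q σ) → (univ.filter p).card = (univ.filter q).card := by
    intro p q _ _ h
    congr 1
    exact filter_congr fun σ _ => by rw [h σ]
  set t := (univ.filter fun σ : Perm (Fin n) => σ a < σ b ∧ σ b < σ c).card with ht
  have huniv : (univ : Finset (Perm (Fin n))).card
      = (univ.filter fun σ : Perm (Fin n) => σ a < σ b).card
      + (univ.filter fun σ : Perm (Fin n) => ¬ σ a < σ b).card :=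
    (Finset.card_filter_add_card_filter_not _).symm
  have s1 := card_split (fun σ : Perm (Fin n) => σ a < σ b) (fun σ => σ b < σ c)
  have s2 := card_split (fun σ : Perm (Fin n) => σ a < σ b ∧ ¬ σ b < σ c) (fun σ => σ a < σ c)
  have s3 := card_split (fun σ : Perm (Fin n) => ¬ σ a < σ b) (fun σ => σ a < σ c)
  have s4 := card_split (fun σ : Perm (Fin n) => ¬ σ a < σ b ∧ ¬ σ a < σ c) (fun σ => σ b < σ c)
  have e2 : (univ.filter fun σ : Perm (Fin n) => (σ a < σ b ∧ ¬ σ b < σ c) ∧ σ a < σ c).card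
      = (univ.filter fun σ : Perm (Fin n) => σ a < σ c ∧ σ c < σ b).card := by
    apply eqcard; intro σ
    constructor
    · rintro ⟨⟨h1, h2⟩, h3⟩
      exact ⟨h3, lt_of_le_of_ne (not_lt.1 h2) (key b c hbc σ).symm⟩
    · rintro ⟨h1, h2⟩
      exact ⟨⟨h1.trans h2, not_lt.2 h2.le⟩, h1⟩
  have e5 : (univ.filter fun σ : Perm (Fin n) => (σ a < σ b ∧ ¬ σ b < σ c) ∧ ¬ σ a < σ c).card
      = (univ.filter fun σ : Perm (Fin n) => σ c < σ a ∧ σ a < σ b).card := by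
    apply eqcard; intro σ
    constructor
    · rintro ⟨⟨h1, _⟩, h3⟩
      exact ⟨lt_of_le_of_ne (not_lt.1 h3) (key c a hac.symm σ), h1⟩
    · rintro ⟨h1, h2⟩
      exact ⟨⟨h2, not_lt.2 (h1.trans h2).le⟩, not_lt.2 h1.le⟩
  have e3 : (univ.filter fun σ : Perm (Fin n) => ¬ σ a < σ b ∧ σ a < σ c).card
      = (univ.filter fun σ : Perm (Fin n) => σ b < σ a ∧ σ a < σ c).card := by
    apply eqcard; intro σ
    constructor
    · rintro ⟨h1, h2⟩
      exact ⟨lt_of_le_of_ne (not_lt.1 h1) (key a b hab σ).symm, h2⟩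
    · rintro ⟨h1, h2⟩
      exact ⟨not_lt.2 h1.le, h2⟩
  have e4 : (univ.filter fun σ : Perm (Fin n) => (¬ σ a < σ b ∧ ¬ σ a < σ c) ∧ σ b < σ c).card
      = (univ.filter fun σ : Perm (Fin n) => σ b < σ c ∧ σ c < σ a).card := by
    apply eqcard; intro σ
    constructor
    · rintro ⟨⟨_, h2⟩, h3⟩
      exact ⟨h3, lt_of_le_of_ne (not_lt.1 h2) (key c a hac.symm σ)⟩
    · rintro ⟨h1, h2⟩
      exact ⟨⟨not_lt.2 (h1.trans h2).le, not_lt.2 h2.le⟩, h1⟩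
  have e6 : (univ.filter fun σ : Perm (Fin n) => (¬ σ a < σ b ∧ ¬ σ a < σ c) ∧ ¬ σ b < σ c).card
      = (univ.filter fun σ : Perm (Fin n) => σ c < σ b ∧ σ b < σ a).card := by
    apply eqcard; intro σ
    constructor
    · rintro ⟨⟨h1, _⟩, h3⟩
      exact ⟨lt_of_le_of_ne (not_lt.1 h3) (key c b hbc.symm σ),
        lt_of_le_of_ne (not_lt.1 h1) (key b a hab.symm σ)⟩
    · rintro ⟨h1, h2⟩
      exact ⟨⟨not_lt.2 h2.le, not_lt.2 (h1.trans h2).le⟩, not_lt.2 h1.le⟩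
  -- bijections to t
  have b2 : (univ.filter fun σ : Perm (Fin n) => σ a < σ c ∧ σ c < σ b).card = t := by
    apply card_swap _ _ b c
    intro σ
    simp [Perm.mul_apply, Equiv.swap_apply_of_ne_of_ne hab hac]
  have b3 : (univ.filter fun σ : Perm (Fin n) => σ b < σ a ∧ σ a < σ c).card = t := by
    apply card_swap _ _ a b
    intro σ
    simp [Perm.mul_apply, Equiv.swap_apply_of_ne_of_ne hac.symm hbc.symm]
  have b4 : (univ.filter fun σ : Perm (Fin n) => σ b < σ c ∧ σ c < σ a).card
      = (univ.filter fun σ : Perm (Fin n) => σ a < σ c ∧ σ c < σ b).card := by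
    apply card_swap _ _ a b
    intro σ
    simp [Perm.mul_apply, Equiv.swap_apply_of_ne_of_ne hac.symm hbc.symm]
  have b5 : (univ.filter fun σ : Perm (Fin n) => σ c < σ a ∧ σ a < σ b).card
      = (univ.filter fun σ : Perm (Fin n) => σ b < σ a ∧ σ a < σ c).card := by
    apply card_swap _ _ b c
    intro σ
    simp [Perm.mul_apply, Equiv.swap_apply_of_ne_of_ne hab hac]
  have b6 : (univ.filter fun σ : Perm (Fin n) => σ c < σ b ∧ σ b < σ a).card
      = (univ.filter fun σ : Perm (Fin n) => σ b < σ c ∧ σ c < σ a).card := by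
    apply card_swap _ _ b c
    intro σ
    simp [Perm.mul_apply, Equiv.swap_apply_of_ne_of_ne hab hac]
  rw [s1, s2, s3, s4, e2, e5, e3, e4, e6, b2, b3, b4, b2, b5, b3, b6, b4, b2] at huniv
  rw [card_univ, Fintype.card_perm, Fintype.card_fin] at huniv
  omega

lemma count_quad (a b c d : Fin n) (hab : a ≠ b) (hcd : c ≠ d)
    (hac : a ≠ c) (had : a ≠ d) (hbc : b ≠ c) (hbd : b ≠ d) :
    4 * (univ.filter fun σ : Perm (Fin n) => σ a < σ b ∧ σ c < σ d).card = n.factorial := by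
  have key : ∀ (x y : Fin n), x ≠ y → ∀ σ : Perm (Fin n), σ x ≠ σ y :=
    fun x y hxy σ hc => hxy (σ.injective hc)
  have huniv : (univ : Finset (Perm (Fin n))).card
      = (univ.filter fun σ : Perm (Fin n) => σ a < σ b).card
      + (univ.filter fun σ : Perm (Fin n) => ¬ σ a < σ b).card :=
    (Finset.card_filter_add_card_filter_not _).symm
  have s1 := card_split (fun σ : Perm (Fin n) => σ a < σ b) (fun σ => σ c < σ d)
  have s2 := card_split (fun σ : Perm (Fin n) => ¬ σ a < σ b) (fun σ => σ c < σ d)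
  -- bijections
  have b1 : (univ.filter fun σ : Perm (Fin n) => σ a < σ b ∧ ¬ σ c < σ d).card
      = (univ.filter fun σ : Perm (Fin n) => σ a < σ b ∧ σ c < σ d).card := by
    apply card_swap _ _ c d
    intro σ
    simp only [Perm.mul_apply, Equiv.swap_apply_left, Equiv.swap_apply_right,
      Equiv.swap_apply_of_ne_of_ne hac had, Equiv.swap_apply_of_ne_of_ne hbc hbd]
    constructor
    · rintro ⟨h1, h2⟩
      exact ⟨h1, lt_of_le_of_ne (not_lt.1 h2) (key c d hcd σ).symm⟩
    · rintro ⟨h1, h2⟩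
      exact ⟨h1, not_lt.2 h2.le⟩
  have b2 : (univ.filter fun σ : Perm (Fin n) => ¬ σ a < σ b ∧ σ c < σ d).card
      = (univ.filter fun σ : Perm (Fin n) => σ a < σ b ∧ σ c < σ d).card := by
    apply card_swap _ _ a b
    intro σ
    simp only [Perm.mul_apply, Equiv.swap_apply_left, Equiv.swap_apply_right,
      Equiv.swap_apply_of_ne_of_ne hac.symm hbc.symm, Equiv.swap_apply_of_ne_of_ne had.symm hbd.symm]
    constructor
    · rintro ⟨h1, h2⟩
      exact ⟨lt_of_le_of_ne (not_lt.1 h1) (key a b hab σ).symm, h2⟩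
    · rintro ⟨h1, h2⟩
      exact ⟨not_lt.2 h1.le, h2⟩
  have b3 : (univ.filter fun σ : Perm (Fin n) => ¬ σ a < σ b ∧ ¬ σ c < σ d).card
      = (univ.filter fun σ : Perm (Fin n) => σ a < σ b ∧ ¬ σ c < σ d).card := by
    apply card_swap _ _ a b
    intro σ
    simp only [Perm.mul_apply, Equiv.swap_apply_left, Equiv.swap_apply_right,
      Equiv.swap_apply_of_ne_of_ne hac.symm hbc.symm, Equiv.swap_apply_of_ne_of_ne had.symm hbd.symm]
    constructor
    · rintro ⟨h1, h2⟩
      exact ⟨lt_of_le_of_ne (not_lt.1 h1) (key a b hab σ).symm, h2⟩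
    · rintro ⟨h1, h2⟩
      exact ⟨not_lt.2 h1.le, h2⟩
  rw [s1, s2, b1, b2, b3, b1] at huniv
  rw [show (4:ℕ) = 2+1+1 by rfl] at *
  rw [card_univ, Fintype.card_perm, Fintype.card_fin] at huniv
  omega


lemma sum_chi (k : ℕ) (hk : k + 1 < n) :
    2 * ∑ σ : Perm (Fin n), chi n k σ = n.factorial := by
  have : ∀ σ : Perm (Fin n), chi n k σ
      = if σ ⟨k, Nat.lt_of_succ_lt hk⟩ < σ ⟨k + 1, hk⟩ then 1 else 0 := by
    intro σ; unfold chi; rw [dif_pos hk]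
  simp_rw [this, Finset.sum_boole]
  rw [← count_pair ⟨k, Nat.lt_of_succ_lt hk⟩ ⟨k + 1, hk⟩ (by simp only [ne_eq, Fin.mk.injEq]; omega)]
  norm_cast

lemma chi_mul (k l : ℕ) (hk : k + 1 < n) (hl : l + 1 < n) (σ : Perm (Fin n)) :
    chi n k σ * chi n l σ
      = if (σ ⟨k, Nat.lt_of_succ_lt hk⟩ < σ ⟨k + 1, hk⟩
          ∧ σ ⟨l, Nat.lt_of_succ_lt hl⟩ < σ ⟨l + 1, hl⟩) then 1 else 0 := by
  unfold chi
  rw [dif_pos hk, dif_pos hl]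
  by_cases h1 : σ ⟨k, Nat.lt_of_succ_lt hk⟩ < σ ⟨k + 1, hk⟩ <;>
    by_cases h2 : σ ⟨l, Nat.lt_of_succ_lt hl⟩ < σ ⟨l + 1, hl⟩ <;>
    simp [h1, h2]

/-- the pair-correlation sums -/
lemma sum_chi_mul_diag (k : ℕ) (hk : k + 1 < n) :
    2 * ∑ σ : Perm (Fin n), chi n k σ * chi n k σ = n.factorial := by
  have : ∀ σ : Perm (Fin n), chi n k σ * chi n k σ = chi n k σ := by
    intro σ; unfold chi; rw [dif_pos hk]; split <;> simp
  simp_rw [this]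
  exact sum_chi k hk

lemma sum_chi_mul_adj (k : ℕ) (hk : k + 1 + 1 < n) :
    6 * ∑ σ : Perm (Fin n), chi n k σ * chi n (k + 1) σ = n.factorial := by
  have hk1 : k + 1 < n := Nat.lt_of_succ_lt hk
  simp_rw [chi_mul k (k+1) hk1 hk, Finset.sum_boole]
  have := count_triple (n := n) ⟨k, Nat.lt_of_succ_lt hk1⟩ ⟨k + 1, hk1⟩ ⟨k + 2, hk⟩
    (by simp only [ne_eq, Fin.mk.injEq]; omega) (by simp only [ne_eq, Fin.mk.injEq]; omega) (by simp only [ne_eq, Fin.mk.injEq]; omega)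
  rw [← this]
  norm_cast

lemma sum_chi_mul_far (k l : ℕ) (hk : k + 1 < n) (hl : l + 1 < n)
    (h1 : l ≠ k) (h2 : l ≠ k + 1) (h3 : k ≠ l + 1) :
    4 * ∑ σ : Perm (Fin n), chi n k σ * chi n l σ = n.factorial := by
  simp_rw [chi_mul k l hk hl, Finset.sum_boole]
  have := count_quad (n := n) ⟨k, Nat.lt_of_succ_lt hk⟩ ⟨k + 1, hk⟩
    ⟨l, Nat.lt_of_succ_lt hl⟩ ⟨l + 1, hl⟩
    (by simp only [ne_eq, Fin.mk.injEq]; omega) (by simp only [ne_eq, Fin.mk.injEq]; omega) (by simp only [ne_eq, Fin.mk.injEq]; omega)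
    (by simp only [ne_eq, Fin.mk.injEq]; omega) (by simp only [ne_eq, Fin.mk.injEq]; omega) (by simp only [ne_eq, Fin.mk.injEq]; omega)
  rw [← this]
  norm_cast


def dnum (n : ℕ) (σ : Perm (Fin n)) : ℕ := ∑ k ∈ range n, chi n k σ

lemma filter_range_succ_lt : (range n).filter (fun k => k + 1 < n) = range (n - 1) := by
  ext k; simp only [mem_filter, mem_range]; omega

lemma filter_range_succ_succ_lt : (range n).filter (fun k => k + 2 < n) = range (n - 2) := by
  ext k; simp only [mem_filter, mem_range]; omega

lemma sum_ite_succ_lt {M : Type*} [AddCommMonoid M] (c : M) :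
    ∑ k ∈ range n, (if k + 1 < n then c else 0) = (n - 1) • c := by
  rw [← sum_filter, filter_range_succ_lt, sum_const, card_range]

lemma sum_ite_succ_succ_lt {M : Type*} [AddCommMonoid M] (c : M) :
    ∑ k ∈ range n, (if k + 2 < n then c else 0) = (n - 2) • c := by
  rw [← sum_filter, filter_range_succ_succ_lt, sum_const, card_range]

lemma dnum_lt (hn : 1 ≤ n) (σ : Perm (Fin n)) : dnum n σ < n := by
  have h1 : dnum n σ ≤ ∑ k ∈ range n, (if k + 1 < n then 1 else 0) :=
    Finset.sum_le_sum fun k _ => chi_le k σ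
  rw [sum_ite_succ_lt] at h1
  simp only [smul_eq_mul, mul_one] at h1
  omega

lemma card_eq_dnum (σ : Perm (Fin n)) :
    (Finset.univ.filter (fun k : Fin n =>
      ∃ h : (k : ℕ) + 1 < n, σ k < σ ⟨(k : ℕ) + 1, h⟩)).card = dnum n σ := by
  rw [Finset.card_filter, dnum, ← Fin.sum_univ_eq_sum_range (fun k => chi n k σ) n]
  apply Finset.sum_congr rfl
  intro k _
  by_cases h : (k : ℕ) + 1 < n
  · unfold chi
    rw [dif_pos h]
    apply if_congr _ rfl rfl
    constructor
    · rintro ⟨h', hlt⟩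
      simpa [Fin.eta] using hlt
    · intro hlt
      exact ⟨h, by simpa [Fin.eta] using hlt⟩
  · rw [chi_eq_zero h, if_neg]
    rintro ⟨h', -⟩
    exact h h'

lemma transfer (hn : 1 ≤ n) (f : ℕ → ℤ) :
    ∑ m ∈ range n, f m * (eulerian n m : ℤ) = ∑ σ : Perm (Fin n), f (dnum n σ) := by
  have he : ∀ m, eulerian n m = ∑ σ : Perm (Fin n), if dnum n σ = m then 1 else 0 := by
    intro m
    unfold eulerian
    rw [Finset.card_filter]
    exact Finset.sum_congr rfl fun σ _ => by rw [card_eq_dnum]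
  simp_rw [he]
  push_cast
  simp_rw [Finset.mul_sum]
  rw [Finset.sum_comm]
  apply Finset.sum_congr rfl
  intro σ _
  have : ∀ m, f m * (if dnum n σ = m then (1:ℤ) else 0) = if dnum n σ = m then f m else 0 := by
    intro m; split <;> simp_all
  simp_rw [this]
  rw [Finset.sum_ite_eq]
  simp [mem_range.2 (dnum_lt hn σ)]


lemma sum_chi_z (k : ℕ) :
    2 * ∑ σ : Perm (Fin n), (chi n k σ : ℤ) = if k + 1 < n then (n.factorial : ℤ) else 0 := by
  by_cases hk : k + 1 < n
  · rw [if_pos hk]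
    have := congrArg (Nat.cast : ℕ → ℤ) (sum_chi k hk)
    push_cast at this
    linarith
  · rw [if_neg hk]
    simp [chi_eq_zero hk]

lemma S1z (hn : 1 ≤ n) :
    2 * ∑ σ : Perm (Fin n), ((dnum n σ : ℕ) : ℤ) = ((n - 1 : ℕ) : ℤ) * n.factorial := by
  have hd : ∀ σ : Perm (Fin n), ((dnum n σ : ℕ) : ℤ) = ∑ k ∈ range n, (chi n k σ : ℤ) := by
    intro σ; rw [dnum]; push_cast; rfl
  simp_rw [hd]
  rw [Finset.sum_comm, Finset.mul_sum]
  simp_rw [sum_chi_z]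
  rw [sum_ite_succ_lt]
  simp [nsmul_eq_mul]

lemma sumA (c : ℤ) :
    ∑ k ∈ range n, ∑ l ∈ range n, (if k + 1 < n ∧ l + 1 < n then c else 0)
      = ((n - 1 : ℕ) : ℤ) * (((n - 1 : ℕ) : ℤ) * c) := by
  have h : ∀ k, ∑ l ∈ range n, (if k + 1 < n ∧ l + 1 < n then c else 0)
      = if k + 1 < n then ((n - 1 : ℕ) : ℤ) * c else 0 := by
    intro k
    by_cases hk : k + 1 < n
    · simp only [hk, true_and, if_pos hk]
      rw [sum_ite_succ_lt]; simp [nsmul_eq_mul]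
    · simp [hk]
  simp_rw [h]
  rw [sum_ite_succ_lt]; simp [nsmul_eq_mul]
lemma sumB (c : ℤ) :
    ∑ k ∈ range n, ∑ l ∈ range n, (if k + 1 < n ∧ k = l then c else 0)
      = ((n - 1 : ℕ) : ℤ) * c := by
  have h : ∀ k ∈ range n, ∑ l ∈ range n, (if k + 1 < n ∧ k = l then c else 0)
      = if k + 1 < n then c else 0 := by
    intro k hkmem
    by_cases hk : k + 1 < n
    · simp only [hk, true_and, if_pos hk]
      rw [Finset.sum_ite_eq]
      simp [hkmem]
    · simp [hk]
  rw [Finset.sum_congr rfl h, sum_ite_succ_lt]; simp [nsmul_eq_mul]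
lemma sumC (c : ℤ) :
    ∑ k ∈ range n, ∑ l ∈ range n, (if k + 2 < n ∧ l = k + 1 then c else 0)
      = ((n - 2 : ℕ) : ℤ) * c := by
  have h : ∀ k, ∑ l ∈ range n, (if k + 2 < n ∧ l = k + 1 then c else 0)
      = if k + 2 < n then c else 0 := by
    intro k
    by_cases hk : k + 2 < n
    · simp only [hk, true_and, if_pos hk]
      rw [Finset.sum_ite_eq']
      simp [mem_range.2 (by omega : k + 1 < n)]
    · simp [hk]
  simp_rw [h]
  rw [sum_ite_succ_succ_lt]; simp [nsmul_eq_mul]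
lemma sumC' (c : ℤ) :
    ∑ k ∈ range n, ∑ l ∈ range n, (if l + 2 < n ∧ k = l + 1 then c else 0)
      = ((n - 2 : ℕ) : ℤ) * c := by
  rw [Finset.sum_comm]
  exact sumC c

lemma corr (k l : ℕ) :
    12 * ∑ σ : Perm (Fin n), (chi n k σ : ℤ) * (chi n l σ : ℤ)
      = ((if k + 1 < n ∧ l + 1 < n then (3 * n.factorial : ℤ) else 0)
        + (if k + 1 < n ∧ k = l then (3 * n.factorial : ℤ) else 0))
        - (if k + 2 < n ∧ l = k + 1 then (n.factorial : ℤ) else 0)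
        - (if l + 2 < n ∧ k = l + 1 then (n.factorial : ℤ) else 0) := by
  by_cases hk : k + 1 < n
  · by_cases hl : l + 1 < n
    · by_cases hkl : k = l
      · have c1 : k + 1 < n ∧ l + 1 < n := ⟨hk, hl⟩
        have c2 : k + 1 < n ∧ k = l := ⟨hk, hkl⟩
        have c3 : ¬ (k + 2 < n ∧ l = k + 1) := by omega
        have c4 : ¬ (l + 2 < n ∧ k = l + 1) := by omega
        rw [if_pos c1, if_pos c2, if_neg c3, if_neg c4]
        subst hkl
        have := congrArg (Nat.cast : ℕ → ℤ) (sum_chi_mul_diag k hk)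
        push_cast at this
        linarith
      · by_cases hadj : l = k + 1
        · have c1 : k + 1 < n ∧ l + 1 < n := ⟨hk, hl⟩
          have c2 : ¬ (k + 1 < n ∧ k = l) := by omega
          have c3 : k + 2 < n ∧ l = k + 1 := by omega
          have c4 : ¬ (l + 2 < n ∧ k = l + 1) := by omega
          rw [if_pos c1, if_neg c2, if_pos c3, if_neg c4]
          subst hadj
          have := congrArg (Nat.cast : ℕ → ℤ) (sum_chi_mul_adj k hl)
          push_cast at this
          linarith
        · by_cases hadj' : k = l + 1
          · have c1 : k + 1 < n ∧ l + 1 < n := ⟨hk, hl⟩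
            have c2 : ¬ (k + 1 < n ∧ k = l) := by omega
            have c3 : ¬ (k + 2 < n ∧ l = k + 1) := by omega
            have c4 : l + 2 < n ∧ k = l + 1 := by omega
            rw [if_pos c1, if_neg c2, if_neg c3, if_pos c4]
            subst hadj'
            have hc : ∀ σ : Perm (Fin n), (chi n (l+1) σ : ℤ) * chi n l σ
                = (chi n l σ : ℤ) * chi n (l+1) σ := fun σ => mul_comm _ _
            simp_rw [hc]
            have := congrArg (Nat.cast : ℕ → ℤ) (sum_chi_mul_adj l hk)
            push_cast at this
            linarith
          · have c1 : k + 1 < n ∧ l + 1 < n := ⟨hk, hl⟩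
            have c2 : ¬ (k + 1 < n ∧ k = l) := by omega
            have c3 : ¬ (k + 2 < n ∧ l = k + 1) := by omega
            have c4 : ¬ (l + 2 < n ∧ k = l + 1) := by omega
            rw [if_pos c1, if_neg c2, if_neg c3, if_neg c4]
            have := congrArg (Nat.cast : ℕ → ℤ)
              (sum_chi_mul_far k l hk hl (fun h => hkl h.symm) hadj hadj')
            push_cast at this
            linarith
    · have c1 : ¬ (k + 1 < n ∧ l + 1 < n) := by omega
      have c2 : ¬ (k + 1 < n ∧ k = l) := by omega
      have c3 : ¬ (k + 2 < n ∧ l = k + 1) := by omega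
      have c4 : ¬ (l + 2 < n ∧ k = l + 1) := by omega
      rw [if_neg c1, if_neg c2, if_neg c3, if_neg c4]
      simp [chi_eq_zero hl]
  · have c1 : ¬ (k + 1 < n ∧ l + 1 < n) := by omega
    have c2 : ¬ (k + 1 < n ∧ k = l) := by omega
    have c3 : ¬ (k + 2 < n ∧ l = k + 1) := by omega
    have c4 : ¬ (l + 2 < n ∧ k = l + 1) := by omega
    rw [if_neg c1, if_neg c2, if_neg c3, if_neg c4]
    simp [chi_eq_zero hk]

lemma S2z :
    12 * ∑ σ : Perm (Fin n), ((dnum n σ : ℕ) : ℤ) ^ 2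
      = ((n - 1 : ℕ) : ℤ) * (((n - 1 : ℕ) : ℤ) * (3 * n.factorial))
        + ((n - 1 : ℕ) : ℤ) * (3 * n.factorial)
        - ((n - 2 : ℕ) : ℤ) * n.factorial - ((n - 2 : ℕ) : ℤ) * n.factorial := by
  have hd : ∀ σ : Perm (Fin n), ((dnum n σ : ℕ) : ℤ) ^ 2
      = ∑ k ∈ range n, ∑ l ∈ range n, (chi n k σ : ℤ) * (chi n l σ : ℤ) := by
    intro σ
    rw [dnum]
    push_cast
    rw [sq, Finset.sum_mul_sum]
  simp_rw [hd]
  rw [Finset.sum_comm, Finset.mul_sum]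
  have hswap : ∀ k ∈ range n,
      12 * ∑ σ : Perm (Fin n), ∑ l ∈ range n, (chi n k σ : ℤ) * chi n l σ
      = ∑ l ∈ range n, (((if k + 1 < n ∧ l + 1 < n then (3 * n.factorial : ℤ) else 0)
        + (if k + 1 < n ∧ k = l then (3 * n.factorial : ℤ) else 0))
        - (if k + 2 < n ∧ l = k + 1 then (n.factorial : ℤ) else 0)
        - (if l + 2 < n ∧ k = l + 1 then (n.factorial : ℤ) else 0)) := by
    intro k _
    rw [Finset.sum_comm, Finset.mul_sum]
    exact Finset.sum_congr rfl fun l _ => corr k l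
  rw [Finset.sum_congr rfl hswap]
  simp_rw [Finset.sum_sub_distrib, Finset.sum_add_distrib]
  rw [sumA, sumB, sumC, sumC']
end MSL

/-- For every integer `i ≥ 2`, `6 · ∑_{m=0}^{2i-2} (m - (i-1))² · A(2i-1, m) = (2i-1)! · i`;
equivalently, the mean squared linking number of two disjoint monotonic cycles with `i`
interior edges each, over all random book embeddings, is `i / 6`. -/
theorem mean_squared_linking (i : ℕ) (hi : 2 ≤ i) :
    6 * ∑ m ∈ Finset.range (2 * i - 1),
        ((m : ℤ) - ((i : ℤ) - 1)) ^ 2 * eulerian (2 * i - 1) m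
      = ((2 * i - 1).factorial : ℤ) * i := by
  have hn : 1 ≤ 2 * i - 1 := by omega
  rw [MSL.transfer hn (fun m => ((m : ℤ) - ((i : ℤ) - 1)) ^ 2)]
  apply mul_left_cancel₀ (two_ne_zero (α := ℤ))
  have hS1 := MSL.S1z (n := 2 * i - 1) hn
  have hS2 := MSL.S2z (n := 2 * i - 1)
  have hc1 : ((2 * i - 1 - 1 : ℕ) : ℤ) = 2 * (i : ℤ) - 2 := by omega
  have hc2 : ((2 * i - 1 - 2 : ℕ) : ℤ) = 2 * (i : ℤ) - 3 := by omega
  rw [hc1] at hS1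
  rw [hc1, hc2] at hS2
  have hcard : ((Finset.univ : Finset (Equiv.Perm (Fin (2 * i - 1)))).card : ℤ)
      = (2 * i - 1).factorial := by
    rw [Finset.card_univ, Fintype.card_perm, Fintype.card_fin]
  have hexp : ∀ σ : Equiv.Perm (Fin (2 * i - 1)),
      (((MSL.dnum (2 * i - 1) σ : ℕ) : ℤ) - ((i : ℤ) - 1)) ^ 2
      = ((MSL.dnum (2 * i - 1) σ : ℕ) : ℤ) ^ 2
        - 2 * ((i : ℤ) - 1) * ((MSL.dnum (2 * i - 1) σ : ℕ) : ℤ) + ((i : ℤ) - 1) ^ 2 := by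
    intro σ; ring
  simp_rw [hexp]
  rw [Finset.sum_add_distrib, Finset.sum_sub_distrib, Finset.sum_const,
    ← Finset.mul_sum, nsmul_eq_mul, hcard]
  linear_combination hS2 - 12 * ((i : ℤ) - 1) * hS1
end

section
/- For every integer i ≥ 2, 3 · ∑_{σ ∈ Perm(Fin (2i))} L(σ)² = (2i)! · 2i. Equivalently, when σ is chosen uniformly at random from the permutations of Fin (2i), the expected value of (L(σ)/2)², i.e., of the squared linking number of two disjoint strictly increasing i-cycles in the corresponding random book embedding of K_{2i}, equals i/6. -/
-- six-sum lemma
lemma six_sum {α : Type*} [LinearOrder α] (a b c : α) (hab : a ≠ b) (hac : a ≠ c) (hbc : b ≠ c) :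
    (if a < b then (1:ℤ) else -1) * (if b < c then (1:ℤ) else -1)
  + (if b < a then (1:ℤ) else -1) * (if a < c then (1:ℤ) else -1)
  + (if a < c then (1:ℤ) else -1) * (if c < b then (1:ℤ) else -1)
  + (if b < c then (1:ℤ) else -1) * (if c < a then (1:ℤ) else -1)
  + (if c < a then (1:ℤ) else -1) * (if a < b then (1:ℤ) else -1)
  + (if c < b then (1:ℤ) else -1) * (if b < a then (1:ℤ) else -1) = -2 := by
  rcases hab.lt_or_gt with h1 | h1 <;> rcases hac.lt_or_gt with h2 | h2 <;>
    rcases hbc.lt_or_gt with h3 | h3 <;>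
    first
      | (exact absurd (h1.trans h3) h2.asymm)
      | (exact absurd (h3.trans h1) h2.asymm)
      | norm_num [h1, h2, h3, h1.asymm, h2.asymm, h3.asymm]

section
variable {N : ℕ} [NeZero N]

lemma fin_addone_val (j : Fin N) : (j + 1).val = (j.val + 1) % N := by
  rw [Fin.add_def, Fin.val_one']
  simp [Nat.add_mod]

lemma fin_succ_ne (hN : 2 ≤ N) (j : Fin N) : j + 1 ≠ j := by
  intro h
  have hv := congrArg Fin.val h
  rw [fin_addone_val] at hv
  have hj := j.isLt
  rcases Nat.lt_or_ge (j.val + 1) N with h' | h'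
  · rw [Nat.mod_eq_of_lt h'] at hv; omega
  · have h1 : j.val + 1 = N := by omega
    rw [h1, Nat.mod_self] at hv; omega

lemma fin_succsucc_ne (hN : 3 ≤ N) (j : Fin N) : j + 1 + 1 ≠ j := by
  intro h
  have hv := congrArg Fin.val h
  rw [fin_addone_val, fin_addone_val, Nat.mod_add_mod] at hv
  have hj := j.isLt
  rcases Nat.lt_or_ge (j.val + 1 + 1) N with h' | h'
  · rw [Nat.mod_eq_of_lt h'] at hv; omega
  · rcases Nat.lt_or_ge N (j.val + 1 + 1) with h'' | h''
    · have h1 : j.val + 1 + 1 = N + 1 := by omega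
      rw [h1, Nat.add_mod_left, Nat.mod_eq_of_lt (by omega)] at hv; omega
    · have h1 : j.val + 1 + 1 = N := by omega
      rw [h1, Nat.mod_self] at hv; omega

end

section
variable {N : ℕ} [NeZero N]

open Equiv Finset

def eps (σ : Equiv.Perm (Fin N)) (j : Fin N) : ℤ :=
  if σ j < σ (j + 1) then 1 else -1

lemma eps_mul_self (σ : Equiv.Perm (Fin N)) (j : Fin N) : eps σ j * eps σ j = 1 := by
  unfold eps; split <;> norm_num

lemma sum_T_self (j : Fin N) :
    ∑ σ : Equiv.Perm (Fin N), eps σ j * eps σ j = (N.factorial : ℤ) := by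
  simp [eps_mul_self, Finset.card_univ, Fintype.card_perm]

lemma eps_swap (σ : Equiv.Perm (Fin N)) (j : Fin N) (hj : j + 1 ≠ j) :
    eps (σ * Equiv.swap j (j + 1)) j = - eps σ j := by
  have hne : σ (j + 1) ≠ σ j := fun h => hj (σ.injective h)
  unfold eps
  simp only [Equiv.Perm.mul_apply, Equiv.swap_apply_left, Equiv.swap_apply_right]
  rcases hne.lt_or_gt with h | h
  · rw [if_pos h, if_neg h.asymm]; norm_num
  · rw [if_neg h.asymm, if_pos h]

lemma eps_swap_other (σ : Equiv.Perm (Fin N)) (j k : Fin N)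
    (h1 : k ≠ j) (h2 : k ≠ j + 1) (h3 : k + 1 ≠ j) (h4 : k + 1 ≠ j + 1) :
    eps (σ * Equiv.swap j (j + 1)) k = eps σ k := by
  unfold eps
  simp only [Equiv.Perm.mul_apply, Equiv.swap_apply_of_ne_of_ne h1 h2,
    Equiv.swap_apply_of_ne_of_ne h3 h4]

lemma sum_T_zero (j k : Fin N) (hj : j + 1 ≠ j)
    (h1 : k ≠ j) (h2 : k ≠ j + 1) (h3 : k + 1 ≠ j) :
    ∑ σ : Equiv.Perm (Fin N), eps σ j * eps σ k = 0 := by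
  have h4 : k + 1 ≠ j + 1 := fun h => h1 (add_right_cancel h)
  have key := Equiv.sum_comp (Equiv.mulRight (Equiv.swap j (j + 1)))
      (fun σ : Equiv.Perm (Fin N) => eps σ j * eps σ k)
  simp only [Equiv.coe_mulRight] at key
  have : ∀ σ : Equiv.Perm (Fin N),
      eps (σ * Equiv.swap j (j + 1)) j * eps (σ * Equiv.swap j (j + 1)) k
        = -(eps σ j * eps σ k) := by
    intro σ
    rw [eps_swap σ j hj, eps_swap_other σ j k h1 h2 h3 h4]
    ring
  rw [Finset.sum_congr rfl (fun σ _ => this σ), Finset.sum_neg_distrib /-check-/] at key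
  linarith
end

section
variable {N : ℕ} [NeZero N]

lemma sum_T_adj (j : Fin N) (h21 : j + 1 ≠ j) (h31 : j + 1 + 1 ≠ j) (h32 : j + 1 + 1 ≠ j + 1) :
    3 * ∑ σ : Equiv.Perm (Fin N), eps σ j * eps σ (j + 1) = -(N.factorial : ℤ) := by
  set s1 := Equiv.swap j (j + 1) with hs1
  set s2 := Equiv.swap (j + 1) (j + 1 + 1) with hs2
  set f : Equiv.Perm (Fin N) → ℤ := fun σ => eps σ j * eps σ (j + 1) with hf
  have e1 : s1 (j + 1 + 1) = j + 1 + 1 := Equiv.swap_apply_of_ne_of_ne h31 h32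
  have e2 : s2 j = j := Equiv.swap_apply_of_ne_of_ne (Ne.symm h21) (Ne.symm h31)
  have key : ∀ σ : Equiv.Perm (Fin N),
      f σ + f (σ * s1) + f (σ * s2) + f (σ * (s1 * s2)) + f (σ * (s2 * s1))
        + f (σ * (s1 * s2 * s1)) = -2 := by
    intro σ
    have hab : σ j ≠ σ (j + 1) := fun h => h21 (σ.injective h.symm)
    have hac : σ j ≠ σ (j + 1 + 1) := fun h => h31 (σ.injective h.symm)
    have hbc : σ (j + 1) ≠ σ (j + 1 + 1) := fun h => h32 (σ.injective h.symm)
    simp only [hf, eps, Equiv.Perm.mul_apply, hs1, hs2, Equiv.swap_apply_left,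
      Equiv.swap_apply_right, e1, e2, Equiv.swap_apply_of_ne_of_ne h31 h32,
      Equiv.swap_apply_of_ne_of_ne (Ne.symm h21) (Ne.symm h31)]
    exact six_sum (σ j) (σ (j + 1)) (σ (j + 1 + 1)) hab hac hbc
  have hsum : ∀ g : Equiv.Perm (Fin N),
      ∑ σ : Equiv.Perm (Fin N), f (σ * g) = ∑ σ : Equiv.Perm (Fin N), f σ := by
    intro g
    simpa using Equiv.sum_comp (Equiv.mulRight g) f
  have h6 : ∑ σ : Equiv.Perm (Fin N),
      (f σ + f (σ * s1) + f (σ * s2) + f (σ * (s1 * s2)) + f (σ * (s2 * s1))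
        + f (σ * (s1 * s2 * s1))) = ∑ _σ : Equiv.Perm (Fin N), (-2 : ℤ) :=
    Finset.sum_congr rfl (fun σ _ => key σ)
  rw [Finset.sum_add_distrib, Finset.sum_add_distrib, Finset.sum_add_distrib,
    Finset.sum_add_distrib, Finset.sum_add_distrib,
    hsum s1, hsum s2, hsum (s1 * s2), hsum (s2 * s1), hsum (s1 * s2 * s1)] at h6
  simp only [Finset.sum_const, Finset.card_univ, Fintype.card_perm, nsmul_eq_mul,
    Fintype.card_fin] at h6
  linarith

end

section
variable {N : ℕ} [NeZero N]

lemma sum_row (hN : 3 ≤ N) (j : Fin N) :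
    ∑ k : Fin N, 3 * ∑ σ : Equiv.Perm (Fin N), eps σ j * eps σ k = (N.factorial : ℤ) := by
  have hN2 : 2 ≤ N := by omega
  have hA : ∀ m : Fin N, m + 1 ≠ m := fin_succ_ne hN2
  have hB : ∀ m : Fin N, m + 1 + 1 ≠ m := fin_succsucc_ne hN
  have claim : ∀ k : Fin N, 3 * ∑ σ : Equiv.Perm (Fin N), eps σ j * eps σ k
      = (if k = j then 3 * (N.factorial : ℤ) else 0)
        + (if k = j + 1 then -(N.factorial : ℤ) else 0)
        + (if k = j - 1 then -(N.factorial : ℤ) else 0) := by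
    intro k
    by_cases h1 : k = j
    · subst h1
      rw [sum_T_self, if_pos rfl, if_neg (Ne.symm (hA k)),
        if_neg (fun h => hA k (eq_sub_iff_add_eq.mp h))]
      ring
    · by_cases h2 : k = j + 1
      · subst h2
        rw [sum_T_adj j (hA j) (hB j) (hA (j + 1)), if_neg h1, if_pos rfl,
          if_neg (fun h => hB j (eq_sub_iff_add_eq.mp h))]
        ring
      · by_cases h3 : k = j - 1
        · have hk1 : k + 1 = j := eq_sub_iff_add_eq.mp h3
          subst hk1
          have hre : ∑ σ : Equiv.Perm (Fin N), eps σ (k + 1) * eps σ k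
              = ∑ σ : Equiv.Perm (Fin N), eps σ k * eps σ (k + 1) :=
            Finset.sum_congr rfl fun σ _ => mul_comm _ _
          rw [hre, sum_T_adj k (hA k) (hB k) (hA (k + 1)), if_neg h1, if_neg h2, if_pos h3]
          ring
        · rw [sum_T_zero j k (hA j) h1 h2 (fun h => h3 (eq_sub_iff_add_eq.mpr h)),
            if_neg h1, if_neg h2, if_neg h3]
          ring
  rw [Finset.sum_congr rfl fun k _ => claim k, Finset.sum_add_distrib, Finset.sum_add_distrib,
    Finset.sum_ite_eq' Finset.univ j, Finset.sum_ite_eq' Finset.univ (j + 1),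
    Finset.sum_ite_eq' Finset.univ (j - 1)]
  simp only [Finset.mem_univ, if_true]
  ring

end


/-- For every integer `i ≥ 2`, `3 · ∑_σ L(σ)² = (2i)! · 2i`, summing over all permutations
`σ` of `Fin (2i)`; equivalently, for a uniformly random `σ`, the expected value of
`(L(σ)/2)²`, the squared linking number of two disjoint strictly increasing `i`-cycles in
the corresponding random book embedding of `K_{2i}`, equals `i / 6`. -/
theorem sum_squared_cyclicSignedSum (i : ℕ) (hi : 2 ≤ i) :
    3 * ∑ σ : Equiv.Perm (Fin (2 * i)), (cyclicSignedSum σ) ^ 2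
      = ((2 * i).factorial : ℤ) * (2 * i) := by
  haveI : NeZero (2 * i) := ⟨by omega⟩
  have hN3 : 3 ≤ 2 * i := by omega
  have hidx : ∀ j : Fin (2 * i),
      (⟨((j : ℕ) + 1) % (2 * i), Nat.mod_lt _ j.pos⟩ : Fin (2 * i)) = j + 1 :=
    fun j => Fin.ext (by rw [fin_addone_val])
  have hL : ∀ σ : Equiv.Perm (Fin (2 * i)), cyclicSignedSum σ = ∑ j, eps σ j := by
    intro σ
    exact Finset.sum_congr rfl fun j _ => by rw [hidx j]; rfl
  have step1 : ∀ σ : Equiv.Perm (Fin (2 * i)),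
      (cyclicSignedSum σ) ^ 2 = ∑ j : Fin (2 * i), ∑ k : Fin (2 * i), eps σ j * eps σ k := by
    intro σ
    rw [hL, pow_two, Finset.sum_mul_sum]
  rw [Finset.sum_congr rfl fun σ _ => step1 σ]
  have step2 : ∑ σ : Equiv.Perm (Fin (2 * i)), ∑ j : Fin (2 * i), ∑ k : Fin (2 * i),
      eps σ j * eps σ k
      = ∑ j : Fin (2 * i), ∑ k : Fin (2 * i), ∑ σ : Equiv.Perm (Fin (2 * i)),
        eps σ j * eps σ k := by
    rw [Finset.sum_comm]
    exact Finset.sum_congr rfl fun j _ => Finset.sum_comm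
  rw [step2, Finset.mul_sum]
  have step3 : ∀ j : Fin (2 * i),
      3 * ∑ k : Fin (2 * i), ∑ σ : Equiv.Perm (Fin (2 * i)), eps σ j * eps σ k
        = ((2 * i).factorial : ℤ) := by
    intro j
    rw [Finset.mul_sum]
    exact sum_row hN3 j
  rw [Finset.sum_congr rfl fun j _ => step3 j]
  simp [Finset.card_univ, mul_comm]
end

section
/- Let m, n ≥ 3 and 2 ≤ i ≤ min(m, n). The number of subsets A of ZMod (m+n) with |A| = m, exactly i cyclic blocks, and 0 ∈ A equals C(m, i) · C(n−1, i−1). -/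
/-- The number of cyclic blocks of a finite subset `A` of `ZMod N`: the number of
elements `a ∈ A` with `a + 1 ∉ A`. -/
def cyclicBlocks {N : ℕ} (A : Finset (ZMod N)) : ℕ :=
  (A.filter (fun a => a + 1 ∉ A)).card

open Finset
namespace CSB



/-- `t`-th smallest element of a finset of naturals. -/
def kth (B : Finset ℕ) (t : ℕ) : ℕ :=
  if h : t < B.card then B.orderEmbOfFin rfl ⟨t, h⟩ else 0

lemma kth_mem {B : Finset ℕ} {t : ℕ} (h : t < B.card) : kth B t ∈ B := by
  rw [kth, dif_pos h]; exact orderEmbOfFin_mem _ _ _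

lemma kth_strictMono {B : Finset ℕ} {s t : ℕ} (hst : s < t) (h : t < B.card) :
    kth B s < kth B t := by
  rw [kth, kth, dif_pos h, dif_pos (hst.trans h)]
  exact (B.orderEmbOfFin rfl).strictMono (by exact hst)

lemma kth_surj {B : Finset ℕ} {x : ℕ} (hx : x ∈ B) : ∃ t < B.card, kth B t = x := by
  have : x ∈ Set.range (B.orderEmbOfFin rfl) := by rw [range_orderEmbOfFin]; exact hx
  obtain ⟨t, ht⟩ := this
  exact ⟨t, t.2, by rw [kth, dif_pos t.2]; simpa using ht⟩

lemma kth_filter_lt_card {B : Finset ℕ} {t : ℕ} (h : t < B.card) :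
    (B.filter (· < kth B t)).card = t := by
  rw [kth, dif_pos h]
  have : B.filter (· < B.orderEmbOfFin rfl ⟨t, h⟩)
      = (univ.filter (fun s : Fin B.card => (s : ℕ) < t)).image (B.orderEmbOfFin rfl) := by
    ext x
    simp only [mem_filter, mem_image, mem_univ, true_and]
    constructor
    · rintro ⟨hxB, hxlt⟩
      have : x ∈ Set.range (B.orderEmbOfFin rfl) := by rw [range_orderEmbOfFin]; exact hxB
      obtain ⟨s, rfl⟩ := this
      refine ⟨s, ?_, rfl⟩
      have := (B.orderEmbOfFin rfl).strictMono.lt_iff_lt.mp hxlt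
      exact this
    · rintro ⟨s, hs, rfl⟩
      refine ⟨orderEmbOfFin_mem _ _ _, ?_⟩
      exact (B.orderEmbOfFin rfl).strictMono (by exact hs)
  rw [this, card_image_of_injective _ (B.orderEmbOfFin rfl).injective]
  have : (univ.filter (fun s : Fin B.card => (s : ℕ) < t)) = Finset.Iio (⟨t, h⟩ : Fin B.card) := by
    ext s; simp [Fin.lt_def]
  rw [this, Fin.card_Iio]

lemma kth_rank {B : Finset ℕ} {x : ℕ} (hx : x ∈ B) :
    kth B ((B.filter (· < x)).card) = x := by
  obtain ⟨t, ht, rfl⟩ := kth_surj hx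
  rw [kth_filter_lt_card ht]



lemma kth_zero {B : Finset ℕ} (hB : B.Nonempty) : kth B 0 = B.min' hB := by
  rw [kth, dif_pos (card_pos.mpr hB)]
  exact orderEmbOfFin_zero rfl (card_pos.mpr hB)

lemma kth_mono {B : Finset ℕ} {s t : ℕ} (hst : s ≤ t) (h : t < B.card) :
    kth B s ≤ kth B t := by
  rcases hst.lt_or_eq with h' | rfl
  · exact (kth_strictMono h' h).le
  · exact le_rfl

lemma kth_add_le {B : Finset ℕ} {s t : ℕ} (hst : s ≤ t) (h : t < B.card) :
    kth B s + (t - s) ≤ kth B t := by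
  induction t with
  | zero =>
    have : s = 0 := Nat.le_zero.mp hst
    subst this; simp
  | succ t ih =>
    rcases Nat.lt_succ_iff_lt_or_eq.mp (Nat.lt_succ_of_le hst) with h' | rfl
    · have h1 := ih (Nat.lt_succ_iff.mp h') (Nat.lt_of_succ_lt h)
      have h2 := kth_strictMono (by omega : t < t + 1) h
      omega
    · simp

lemma filter_le_kth_card {B : Finset ℕ} {t : ℕ} (h : t < B.card) :
    (B.filter (· ≤ kth B t)).card = t + 1 := by
  have hx : kth B t ∈ B := kth_mem h
  have : B.filter (· ≤ kth B t) = insert (kth B t) (B.filter (· < kth B t)) := by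
    ext y
    simp only [mem_filter, mem_insert]
    constructor
    · rintro ⟨hy, hle⟩
      rcases hle.lt_or_eq with h' | h'
      · exact Or.inr ⟨hy, h'⟩
      · exact Or.inl h'
    · rintro (rfl | ⟨hy, hlt⟩)
      · exact ⟨hx, le_refl _⟩
      · exact ⟨hy, hlt.le⟩
  rw [this, card_insert_of_notMem (by simp), kth_filter_lt_card h]

/-- Values of a monotone function below `f j` in its image over `[0,M]` are in bijection with
ascent positions before `j`. -/
lemma card_filter_lt_image_monotone {f : ℕ → ℕ} (hf : Monotone f) {M j : ℕ} (hj : j ≤ M) :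
    (((range (M+1)).image f).filter (· < f j)).card
      = ((range j).filter (fun t => f t < f (t+1))).card := by
  have hset : ((range (M+1)).image f).filter (· < f j)
      = ((range j).filter (fun t => f t < f (t+1))).image f := by
    ext x
    simp only [mem_filter, mem_image, mem_range]
    constructor
    · rintro ⟨⟨s, hs, rfl⟩, hlt⟩
      have hsj : s < j := by
        by_contra hc
        exact absurd hlt (not_lt.mpr (hf (not_lt.mp hc)))
      have hTne : ((range j).filter (fun t => f t = f s)).Nonempty :=
        ⟨s, by simp [hsj]⟩
      set t := ((range j).filter (fun t => f t = f s)).max' hTne with htdef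
      have htmem := ((range j).filter (fun t => f t = f s)).max'_mem hTne
      simp only [mem_filter, mem_range] at htmem
      refine ⟨t, ⟨htmem.1, ?_⟩, htmem.2⟩
      rcases Nat.lt_or_ge (t+1) j with h' | h'
      · by_contra hc
        have : f (t+1) = f s := le_antisymm (htmem.2 ▸ not_lt.mp hc) (htmem.2 ▸ hf (Nat.le_succ t))
        have := Finset.le_max' ((range j).filter (fun t => f t = f s)) (t+1)
          (mem_filter.mpr ⟨mem_range.mpr h', this⟩)
        omega
      · have : t + 1 = j := by omega
        rw [this, htmem.2]; exact hlt
    · rintro ⟨t, ⟨htj, hasc⟩, rfl⟩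
      exact ⟨⟨t, by omega, rfl⟩, lt_of_lt_of_le hasc (hf (by omega))⟩
  rw [hset]
  apply card_image_of_injOn
  intro a ha b hb hab
  simp only [coe_filter, Set.mem_setOf_eq, mem_coe, mem_range] at ha hb
  by_contra hne
  rcases Nat.lt_or_ge a b with h' | h'
  · have := lt_of_lt_of_le ha.2 (hf (by omega : a + 1 ≤ b)); omega
  · have hba : b < a := by omega
    have := lt_of_lt_of_le hb.2 (hf (by omega : b + 1 ≤ a)); omega


def tJ (J : Finset ℕ) (j : ℕ) : ℕ := (J.filter (· < j)).card

def Sins (n : ℕ) (S : Finset ℕ) : Finset ℕ := insert 0 (insert n (S.image (· + 1)))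

def stair (n : ℕ) (J S : Finset ℕ) (j : ℕ) : ℕ := kth (Sins n S) (tJ J j)

def psi (m n : ℕ) (J S : Finset ℕ) : Finset ℕ :=
  (range m).image (fun j => j + stair n J S j)

def rk (B : Finset ℕ) (x : ℕ) : ℕ := (B.filter (· < x)).card

def lb (N : ℕ) (B : Finset ℕ) : ℕ := (B.filter (fun a => a + 1 ∉ B ∧ a + 1 ≠ N)).card

def phi (n N : ℕ) (B : Finset ℕ) : Finset ℕ × Finset ℕ :=
  ((B.filter (fun a => a + 1 ∉ B ∧ a + 1 ≠ N)).image (rk B),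
   ((B.image (fun x => x - rk B x)).filter (fun v => 0 < v ∧ v < n)).image (· - 1))

lemma kth_last {B : Finset ℕ} (hB : B.Nonempty) : kth B (B.card - 1) = B.max' hB := by
  rw [kth, dif_pos (by have := card_pos.mpr hB; omega)]
  exact orderEmbOfFin_last rfl (card_pos.mpr hB)

lemma tJ_mono (J : Finset ℕ) : Monotone (tJ J) := by
  intro a b hab
  exact card_le_card (filter_subset_filter _ (fun x hx => hx) |>.trans
    (by intro x; simp only [mem_filter]; exact fun ⟨h1, h2⟩ => ⟨h1, lt_of_lt_of_le h2 hab⟩))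

lemma tJ_zero (J : Finset ℕ) : tJ J 0 = 0 := by simp [tJ]

lemma tJ_le_card (J : Finset ℕ) (j : ℕ) : tJ J j ≤ J.card := card_le_card (filter_subset _ _)

lemma tJ_eq_card {m : ℕ} {J : Finset ℕ} (hJ : J ⊆ range m) {j : ℕ} (hj : m ≤ j) :
    tJ J j = J.card := by
  unfold tJ
  congr 1
  apply filter_true_of_mem
  intro x hx
  have := mem_range.mp (hJ hx)
  omega

lemma tJ_succ (J : Finset ℕ) (j : ℕ) :
    tJ J (j + 1) = tJ J j + (if j ∈ J then 1 else 0) := by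
  unfold tJ
  by_cases hj : j ∈ J
  · rw [if_pos hj]
    have : J.filter (· < j + 1) = insert j (J.filter (· < j)) := by
      ext x
      simp only [mem_filter, mem_insert]
      constructor
      · rintro ⟨h1, h2⟩
        rcases Nat.lt_succ_iff_lt_or_eq.mp h2 with h | h
        · exact Or.inr ⟨h1, h⟩
        · exact Or.inl h
      · rintro (rfl | ⟨h1, h2⟩)
        · exact ⟨hj, Nat.lt_succ_self _⟩
        · exact ⟨h1, by omega⟩
    rw [this, card_insert_of_notMem (by simp)]
  · rw [if_neg hj]
    have : J.filter (· < j + 1) = J.filter (· < j) := by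
      ext x
      simp only [mem_filter]
      constructor
      · rintro ⟨h1, h2⟩
        refine ⟨h1, ?_⟩
        rcases Nat.lt_succ_iff_lt_or_eq.mp h2 with h | h
        · exact h
        · exact absurd (h ▸ h1) hj
      · rintro ⟨h1, h2⟩; exact ⟨h1, by omega⟩
    rw [this]
    omega

lemma tJ_kth_succ {J : Finset ℕ} {t : ℕ} (ht : t < J.card) :
    tJ J (kth J t + 1) = t + 1 := by
  have : J.filter (· < kth J t + 1) = J.filter (· ≤ kth J t) := by
    apply filter_congr; intro x _; simp [Nat.lt_succ_iff]
  rw [tJ, this, filter_le_kth_card ht]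

section PsiSide

variable {m n i : ℕ} {J S : Finset ℕ}

lemma Sins_card (hn : 1 ≤ n) (hi1 : 1 ≤ i) (hS : S ⊆ range (n-1)) (hSc : S.card = i - 1) :
    (Sins n S).card = i + 1 := by
  have himg : (S.image (· + 1)).card = i - 1 := by
    rw [card_image_of_injective _ (add_left_injective 1), hSc]
  have hn_img : n ∉ S.image (· + 1) := by
    simp only [mem_image, not_exists, not_and]
    intro s hs
    have := mem_range.mp (hS hs); omega
  have h0_img : (0 : ℕ) ∉ insert n (S.image (· + 1)) := by
    simp only [mem_insert, mem_image, not_or, not_exists, not_and]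
    exact ⟨by omega, fun s _ => by omega⟩
  rw [Sins, card_insert_of_notMem h0_img, card_insert_of_notMem hn_img, himg]
  omega

lemma mem_Sins_le (hS : S ⊆ range (n-1)) {x : ℕ} (hx : x ∈ Sins n S) : x ≤ n := by
  simp only [Sins, mem_insert, mem_image] at hx
  rcases hx with rfl | rfl | ⟨s, hs, rfl⟩
  · omega
  · omega
  · have := mem_range.mp (hS hs); omega

lemma Sins_nonempty : (Sins n S).Nonempty := ⟨0, by simp [Sins]⟩

lemma kth_Sins_zero (hcard : (Sins n S).card = i + 1) : kth (Sins n S) 0 = 0 := by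
  rw [kth_zero Sins_nonempty]
  exact le_antisymm (min'_le _ 0 (by simp [Sins])) (Nat.zero_le _)

lemma kth_Sins_top (hS : S ⊆ range (n-1)) (hcard : (Sins n S).card = i + 1) :
    kth (Sins n S) i = n := by
  have h1 : kth (Sins n S) ((Sins n S).card - 1) = (Sins n S).max' Sins_nonempty :=
    kth_last _
  rw [hcard] at h1
  simp only [Nat.add_sub_cancel] at h1
  rw [h1]
  apply le_antisymm
  · exact max'_le _ _ _ (fun y hy => mem_Sins_le hS hy)
  · exact le_max' _ n (by simp [Sins])

lemma tJ_lt_Sins_card (hJc : J.card = i) (hcard : (Sins n S).card = i + 1) (j : ℕ) :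
    tJ J j < (Sins n S).card := by
  rw [hcard]
  have := tJ_le_card J j
  omega

lemma stair_zero (hcard : (Sins n S).card = i + 1) : stair n J S 0 = 0 := by
  rw [stair, tJ_zero]
  exact kth_Sins_zero hcard

lemma stair_mono (hJc : J.card = i) (hcard : (Sins n S).card = i + 1) :
    Monotone (stair n J S) := by
  intro a b hab
  exact kth_mono (tJ_mono J hab) (tJ_lt_Sins_card hJc hcard b)

lemma stair_le (hJc : J.card = i) (hS : S ⊆ range (n-1)) (hcard : (Sins n S).card = i + 1)
    (j : ℕ) : stair n J S j ≤ n :=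
  mem_Sins_le hS (kth_mem (tJ_lt_Sins_card hJc hcard j))

lemma stair_ascent_iff (hJc : J.card = i) (hcard : (Sins n S).card = i + 1) (j : ℕ) :
    stair n J S j < stair n J S (j + 1) ↔ j ∈ J := by
  rw [stair, stair, tJ_succ]
  by_cases hj : j ∈ J
  · rw [if_pos hj]
    simp only [hj, iff_true]
    have h2 : tJ J j + 1 ≤ i := by
      have h3 := tJ_le_card J (j+1)
      rw [tJ_succ, if_pos hj, hJc] at h3
      omega
    exact kth_strictMono (by omega) (by rw [hcard]; omega)
  · rw [if_neg hj]
    simp [hj]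

lemma stair_succ_eq (hJc : J.card = i) (hcard : (Sins n S).card = i + 1) {j : ℕ}
    (hj : j ∉ J) : stair n J S (j + 1) = stair n J S j := by
  rw [stair, stair, tJ_succ, if_neg hj, Nat.add_zero]

lemma stair_lt_n_iff (hJc : J.card = i) (hS : S ⊆ range (n-1))
    (hcard : (Sins n S).card = i + 1) (j : ℕ) :
    stair n J S j < n ↔ tJ J j < i := by
  constructor
  · intro h
    by_contra hc
    have heq : tJ J j = i := le_antisymm (hJc ▸ tJ_le_card J j) (not_lt.mp hc)
    rw [stair, heq, kth_Sins_top hS hcard] at h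
    omega
  · intro h
    have h2 := kth_strictMono h (show i < (Sins n S).card by rw [hcard]; omega)
    rw [kth_Sins_top hS hcard] at h2
    exact h2

lemma psi_f_strictMono (hJc : J.card = i) (hcard : (Sins n S).card = i + 1) :
    StrictMono (fun j => j + stair n J S j) := by
  intro a b hab
  have := stair_mono hJc hcard hab.le
  simp only
  omega

lemma mem_psi {x : ℕ} : x ∈ psi m n J S ↔ ∃ j < m, j + stair n J S j = x := by
  simp [psi, mem_image, mem_range]

lemma psi_card (hJc : J.card = i) (hcard : (Sins n S).card = i + 1) :
    (psi m n J S).card = m := by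
  rw [psi, card_image_of_injective _ (psi_f_strictMono hJc hcard).injective, card_range]

lemma psi_zero_mem (hm : 1 ≤ m) (hcard : (Sins n S).card = i + 1) : 0 ∈ psi m n J S := by
  rw [mem_psi]
  exact ⟨0, by omega, by rw [stair_zero hcard]⟩

lemma psi_subset_range (hJc : J.card = i) (hS : S ⊆ range (n-1))
    (hcard : (Sins n S).card = i + 1) : psi m n J S ⊆ range (m + n) := by
  intro x hx
  obtain ⟨j, hj, rfl⟩ := mem_psi.mp hx
  have := stair_le hJc hS hcard j
  rw [mem_range]
  omega

end PsiSide

section PsiSide2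

variable {m n i : ℕ} {J S : Finset ℕ}

lemma succ_mem_psi_iff (hJc : J.card = i) (hcard : (Sins n S).card = i + 1) {j : ℕ}
    (hj : j + 1 < m) :
    (j + stair n J S j) + 1 ∈ psi m n J S ↔ stair n J S (j + 1) = stair n J S j := by
  constructor
  · intro h
    obtain ⟨j', hj', hfj'⟩ := mem_psi.mp h
    have hmono := psi_f_strictMono (S := S) hJc hcard
    have h1 : ¬ (j' ≤ j) := by
      intro hle
      have := hmono.monotone hle
      omega
    have h2 : j + 1 ≤ j' := by omega
    have h3 := hmono.monotone h2
    have h4 := stair_mono hJc hcard (show j ≤ j + 1 by omega)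
    have h5 : j' = j + 1 := by
      by_contra hc
      have := hmono (show j + 1 < j' by omega)
      simp only at this
      omega
    rw [h5] at hfj'
    omega
  · intro h
    rw [mem_psi]
    exact ⟨j + 1, hj, by omega⟩

lemma blockend_iff (hm : 1 ≤ m) (hi1 : 1 ≤ i) (hJ : J ⊆ range m) (hJc : J.card = i)
    (hS : S ⊆ range (n-1)) (hcard : (Sins n S).card = i + 1) {j : ℕ} (hj : j < m) :
    ((j + stair n J S j) + 1 ∉ psi m n J S ∧ (j + stair n J S j) + 1 ≠ m + n) ↔ j ∈ J := by
  rcases Nat.lt_or_ge (j + 1) m with hjm | hjm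
  · have hne : (j + stair n J S j) + 1 ≠ m + n := by
      have := stair_le hJc hS hcard j
      omega
    rw [succ_mem_psi_iff hJc hcard hjm]
    have h4 := stair_mono hJc hcard (show j ≤ j + 1 by omega)
    have h5 := stair_ascent_iff hJc hcard j
    constructor
    · rintro ⟨h1, _⟩
      exact h5.mp (by omega)
    · intro hJ'
      refine ⟨?_, hne⟩
      have := h5.mpr hJ'
      omega
  · have hj1 : j = m - 1 := by omega
    subst hj1
    have hnotmem : (m - 1 + stair n J S (m - 1)) + 1 ∉ psi m n J S := by
      intro h
      obtain ⟨j', hj', hfj'⟩ := mem_psi.mp h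
      have hmono := psi_f_strictMono (S := S) hJc hcard
      have hle' : j' ≤ m - 1 := by omega
      have := hmono.monotone hle'
      omega
    have hlt := stair_lt_n_iff hJc hS hcard (m - 1)
    have hle := stair_le hJc hS hcard (m - 1)
    have htm : tJ J m = i := by rw [tJ_eq_card hJ le_rfl, hJc]
    have htsucc := tJ_succ J (m - 1)
    rw [show m - 1 + 1 = m by omega, htm] at htsucc
    constructor
    · rintro ⟨-, hne⟩
      have hstair : stair n J S (m - 1) < n := by omega
      have h6 := hlt.mp hstair
      by_contra hc
      rw [if_neg hc] at htsucc
      omega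
    · intro hJ'
      rw [if_pos hJ'] at htsucc
      have h6 : tJ J (m - 1) < i := by omega
      have h7 := hlt.mpr h6
      exact ⟨hnotmem, by omega⟩

lemma filter_blockend (hm : 1 ≤ m) (hi1 : 1 ≤ i) (hJ : J ⊆ range m) (hJc : J.card = i)
    (hS : S ⊆ range (n-1)) (hcard : (Sins n S).card = i + 1) :
    (psi m n J S).filter (fun a => a + 1 ∉ psi m n J S ∧ a + 1 ≠ m + n)
      = J.image (fun j => j + stair n J S j) := by
  ext x
  simp only [mem_filter, mem_image]
  constructor
  · rintro ⟨hx, hP⟩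
    obtain ⟨j, hjm, rfl⟩ := mem_psi.mp hx
    exact ⟨j, (blockend_iff hm hi1 hJ hJc hS hcard hjm).mp hP, rfl⟩
  · rintro ⟨j, hjJ, rfl⟩
    have hjm : j < m := mem_range.mp (hJ hjJ)
    refine ⟨mem_psi.mpr ⟨j, hjm, rfl⟩, (blockend_iff hm hi1 hJ hJc hS hcard hjm).mpr hjJ⟩

lemma lb_psi (hm : 1 ≤ m) (hi1 : 1 ≤ i) (hJ : J ⊆ range m) (hJc : J.card = i)
    (hS : S ⊆ range (n-1)) (hcard : (Sins n S).card = i + 1) :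
    lb (m + n) (psi m n J S) = i := by
  rw [lb, filter_blockend hm hi1 hJ hJc hS hcard,
    card_image_of_injective _ (psi_f_strictMono hJc hcard).injective, hJc]

lemma rk_psi (hJc : J.card = i) (hcard : (Sins n S).card = i + 1) {j : ℕ} (hj : j < m) :
    rk (psi m n J S) (j + stair n J S j) = j := by
  have hmono := psi_f_strictMono (S := S) hJc hcard
  have : (psi m n J S).filter (· < j + stair n J S j)
      = (range j).image (fun j' => j' + stair n J S j') := by
    ext x
    simp only [mem_filter, mem_image, mem_range]
    constructor
    · rintro ⟨hx, hlt⟩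
      obtain ⟨j', hj', rfl⟩ := mem_psi.mp hx
      exact ⟨j', hmono.lt_iff_lt.mp hlt, rfl⟩
    · rintro ⟨j', hj', rfl⟩
      exact ⟨mem_psi.mpr ⟨j', by omega, rfl⟩, hmono hj'⟩
  rw [rk, this, card_image_of_injective _ hmono.injective, card_range]

lemma psi_image_stair (hJc : J.card = i) (hcard : (Sins n S).card = i + 1) :
    (psi m n J S).image (fun x => x - rk (psi m n J S) x)
      = (range m).image (stair n J S) := by
  unfold psi
  rw [image_image]
  apply image_congr
  intro j hj
  show j + stair n J S j - rk (psi m n J S) (j + stair n J S j) = stair n J S j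
  rw [rk_psi hJc hcard (mem_range.mp hj)]
  omega

lemma image_stair_filter (hm : 1 ≤ m) (hi1 : 1 ≤ i) (hJ : J ⊆ range m) (hJc : J.card = i)
    (hS : S ⊆ range (n-1)) (hcard : (Sins n S).card = i + 1) :
    ((range m).image (stair n J S)).filter (fun v => 0 < v ∧ v < n)
      = S.image (· + 1) := by
  ext v
  simp only [mem_filter, mem_image, mem_range]
  constructor
  · rintro ⟨⟨j, hj, rfl⟩, h0, hn⟩
    have hmem := kth_mem (tJ_lt_Sins_card hJc hcard j)
    rw [← stair] at hmem
    simp only [Sins, mem_insert, mem_image] at hmem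
    rcases hmem with h | h | ⟨s, hs, h⟩
    · omega
    · omega
    · exact ⟨s, hs, h⟩
  · rintro ⟨s, hs, rfl⟩
    have hsn := mem_range.mp (hS hs)
    have hv : s + 1 ∈ Sins n S := by simp only [Sins, mem_insert, mem_image]; tauto
    obtain ⟨t, ht, hkt⟩ := kth_surj hv
    have ht0 : t ≠ 0 := by
      intro h
      rw [h, kth_Sins_zero hcard] at hkt
      omega
    have hti : t < i := by
      rw [hcard] at ht
      rcases Nat.lt_or_ge t i with h | h
      · exact h
      · have : t = i := by omega
        rw [this, kth_Sins_top hS hcard] at hkt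
        omega
    have ht1 : t - 1 < J.card := by rw [hJc]; omega
    set j := kth J (t - 1) + 1 with hjdef
    have htJ : tJ J j = t := by
      rw [hjdef, tJ_kth_succ ht1]
      omega
    have hjm : j < m := by
      have h1 : kth J (t-1) < kth J (i-1) := by
        rcases Nat.lt_or_ge (t-1) (i-1) with h | h
        · exact kth_strictMono h (by rw [hJc]; omega)
        · omega
      have h2 : kth J (i-1) ∈ J := kth_mem (by rw [hJc]; omega)
      have := mem_range.mp (hJ h2)
      omega
    refine ⟨⟨j, hjm, ?_⟩, by omega, by omega⟩
    rw [stair, htJ, hkt]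

lemma phi_psi (hm : 1 ≤ m) (hi1 : 1 ≤ i) (hJ : J ⊆ range m) (hJc : J.card = i)
    (hS : S ⊆ range (n-1)) (hcard : (Sins n S).card = i + 1) :
    phi n (m + n) (psi m n J S) = (J, S) := by
  rw [phi, Prod.mk.injEq]
  constructor
  · rw [filter_blockend hm hi1 hJ hJc hS hcard, image_image]
    exact Eq.trans (image_congr (g := id)
      (fun j hj => rk_psi hJc hcard (mem_range.mp (hJ hj)))) image_id
  · rw [psi_image_stair hJc hcard, image_stair_filter hm hi1 hJ hJc hS hcard, image_image]
    exact Eq.trans (image_congr (g := id) (fun s _ => by simp)) image_id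

end PsiSide2

section PhiSide

/-- The staircase function of a set `B`. -/
def dd (m n : ℕ) (B : Finset ℕ) (j : ℕ) : ℕ := if j < m then kth B j - j else n

variable {m n i : ℕ} {B : Finset ℕ}

lemma kth_B_zero (h0 : 0 ∈ B) : kth B 0 = 0 := by
  rw [kth_zero ⟨0, h0⟩]
  exact le_antisymm (min'_le _ 0 h0) (Nat.zero_le _)

lemma le_kth (hcard : B.card = m) (h0 : 0 ∈ B) {j : ℕ} (hj : j < m) : j ≤ kth B j := by
  have := kth_add_le (Nat.zero_le j) (by omega : j < B.card)
  rw [kth_B_zero h0] at this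
  omega

lemma kth_le (hsub : B ⊆ range (m+n)) (hcard : B.card = m) (hm : 1 ≤ m) {j : ℕ}
    (hj : j < m) : kth B j ≤ n + j := by
  have h1 := kth_add_le (by omega : j ≤ m - 1) (by omega : m - 1 < B.card)
  have h2 : kth B (m-1) ∈ B := kth_mem (by omega)
  have h3 := mem_range.mp (hsub h2)
  omega

lemma dd_zero (hm : 1 ≤ m) (h0 : 0 ∈ B) : dd m n B 0 = 0 := by
  rw [dd, if_pos (by omega), kth_B_zero h0]

lemma dd_ge {j : ℕ} (hj : m ≤ j) : dd m n B j = n := by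
  rw [dd, if_neg (by omega)]

lemma dd_le_n (hsub : B ⊆ range (m+n)) (hcard : B.card = m) (hm : 1 ≤ m) (h0 : 0 ∈ B)
    (j : ℕ) : dd m n B j ≤ n := by
  rw [dd]
  split
  · next h => have := kth_le hsub hcard hm h; omega
  · exact le_rfl

lemma dd_monotone (hsub : B ⊆ range (m+n)) (hcard : B.card = m) (hm : 1 ≤ m) (h0 : 0 ∈ B) :
    Monotone (dd m n B) := by
  intro a b hab
  rcases Nat.lt_or_ge b m with hb | hb
  · have ha : a < m := by omega
    rw [dd, if_pos ha, dd, if_pos hb]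
    have h1 := kth_add_le hab (by omega : b < B.card)
    have h2 := le_kth hcard h0 ha
    omega
  · rcases Nat.lt_or_ge a m with ha | ha
    · rw [dd, if_pos ha, dd, if_neg (by omega)]
      have := kth_le hsub hcard hm ha
      omega
    · rw [dd, if_neg (by omega), dd, if_neg (by omega)]

lemma kth_eq_add_dd (hcard : B.card = m) (h0 : 0 ∈ B) {j : ℕ} (hj : j < m) :
    j + dd m n B j = kth B j := by
  rw [dd, if_pos hj]
  have := le_kth hcard h0 hj
  omega

lemma B_eq_image (hcard : B.card = m) (h0 : 0 ∈ B) :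
    B = (range m).image (fun j => j + dd m n B j) := by
  ext x
  simp only [mem_image, mem_range]
  constructor
  · intro hx
    obtain ⟨t, ht, rfl⟩ := kth_surj hx
    exact ⟨t, by omega, kth_eq_add_dd hcard h0 (by omega)⟩
  · rintro ⟨j, hj, rfl⟩
    rw [kth_eq_add_dd hcard h0 hj]
    exact kth_mem (by omega)

lemma blockend_iff_dd (hsub : B ⊆ range (m+n)) (hcard : B.card = m) (hm : 1 ≤ m)
    (h0 : 0 ∈ B) {j : ℕ} (hj : j < m) :
    (kth B j + 1 ∉ B ∧ kth B j + 1 ≠ m + n) ↔ dd m n B j < dd m n B (j+1) := by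
  rcases Nat.lt_or_ge (j+1) m with hj1 | hj1
  · have hne : kth B j + 1 ≠ m + n := by
      have h1 := kth_strictMono (by omega : j < m - 1) (by omega : m - 1 < B.card)
      have h2 := mem_range.mp (hsub (kth_mem (by omega : m - 1 < B.card)))
      omega
    have hmem_iff : kth B j + 1 ∈ B ↔ kth B (j+1) = kth B j + 1 := by
      constructor
      · intro h
        obtain ⟨t, ht, hkt⟩ := kth_surj h
        have htj : j < t := by
          by_contra hc
          have := kth_mono (by omega : t ≤ j) (by omega : j < B.card)
          omega
        have h1 := kth_mono (by omega : j + 1 ≤ t) ht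
        have h2 := kth_strictMono (by omega : j < j + 1) (by omega : j + 1 < B.card)
        omega
      · intro h
        rw [← h]
        exact kth_mem (by omega)
    have hd1 : dd m n B j = kth B j - j := by rw [dd, if_pos hj]
    have hd2 : dd m n B (j+1) = kth B (j+1) - (j+1) := by rw [dd, if_pos hj1]
    have h2 := kth_strictMono (by omega : j < j + 1) (by omega : j + 1 < B.card)
    have h3 := le_kth hcard h0 hj
    rw [hd1, hd2]
    constructor
    · rintro ⟨hnm, -⟩
      have : kth B (j+1) ≠ kth B j + 1 := fun hc => hnm (hmem_iff.mpr hc)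
      omega
    · intro h
      refine ⟨fun hc => ?_, hne⟩
      have := hmem_iff.mp hc
      omega
  · have hj1' : j = m - 1 := by omega
    have hnotmem : kth B j + 1 ∉ B := by
      intro h
      obtain ⟨t, ht, hkt⟩ := kth_surj h
      have := kth_mono (by omega : t ≤ j) (by omega : j < B.card)
      omega
    have hd1 : dd m n B j = kth B j - j := by rw [dd, if_pos hj]
    have hd2 : dd m n B (j+1) = n := by rw [dd, if_neg (by omega)]
    have h3 := le_kth hcard h0 hj
    have h4 := kth_le hsub hcard hm hj
    simp only [hnotmem, not_false_eq_true, true_and, ne_eq, hd1, hd2]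
    omega

end PhiSide

section PhiSide2

variable {m n i : ℕ} {B : Finset ℕ}

lemma filter_blockend_B (hsub : B ⊆ range (m+n)) (hcard : B.card = m) (hm : 1 ≤ m)
    (h0 : 0 ∈ B) :
    B.filter (fun a => a + 1 ∉ B ∧ a + 1 ≠ m + n)
      = ((range m).filter (fun j => dd m n B j < dd m n B (j+1))).image
          (fun j => j + dd m n B j) := by
  ext x
  simp only [mem_filter, mem_image, mem_range]
  constructor
  · rintro ⟨hx, hP⟩
    obtain ⟨t, ht, hkt⟩ := kth_surj hx
    rw [hcard] at ht
    refine ⟨t, ⟨ht, ?_⟩, by rw [kth_eq_add_dd hcard h0 ht, hkt]⟩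
    rw [← hkt] at hP
    exact (blockend_iff_dd hsub hcard hm h0 ht).mp hP
  · rintro ⟨t, ⟨ht, hasc⟩, rfl⟩
    rw [kth_eq_add_dd hcard h0 ht]
    exact ⟨kth_mem (by omega), (blockend_iff_dd hsub hcard hm h0 ht).mpr hasc⟩

lemma add_dd_injOn (hcard : B.card = m) (h0 : 0 ∈ B) :
    Set.InjOn (fun j => j + dd m n B j) (range m) := by
  intro a ha b hb hab
  have ha' : a < m := by simpa using ha
  have hb' : b < m := by simpa using hb
  simp only [kth_eq_add_dd hcard h0 ha', kth_eq_add_dd hcard h0 hb'] at hab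
  by_contra hne
  rcases Nat.lt_or_ge a b with h | h
  · exact absurd hab (kth_strictMono h (by omega)).ne
  · exact absurd hab.symm (kth_strictMono (by omega) (by omega)).ne

lemma asc_card (hsub : B ⊆ range (m+n)) (hcard : B.card = m) (hm : 1 ≤ m) (h0 : 0 ∈ B)
    (hlb : lb (m+n) B = i) :
    ((range m).filter (fun j => dd m n B j < dd m n B (j+1))).card = i := by
  rw [lb, filter_blockend_B hsub hcard hm h0] at hlb
  rw [← hlb]
  exact (card_image_of_injOn ((add_dd_injOn hcard h0).mono (by
    intro x hx
    have hx' : x ∈ (range m).filter (fun j => dd m n B j < dd m n B (j+1)) := hx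
    simp only [mem_filter, mem_range] at hx'
    simpa using hx'.1))).symm

lemma phi_fst (hsub : B ⊆ range (m+n)) (hcard : B.card = m) (hm : 1 ≤ m) (h0 : 0 ∈ B) :
    (phi n (m+n) B).1 = (range m).filter (fun j => dd m n B j < dd m n B (j+1)) := by
  rw [phi, filter_blockend_B hsub hcard hm h0, image_image]
  refine Eq.trans (image_congr (g := id) ?_) image_id
  intro j hj
  obtain ⟨hjm, -⟩ := mem_filter.mp hj
  have hjm' := mem_range.mp hjm
  show rk B (j + dd m n B j) = j
  rw [kth_eq_add_dd hcard h0 hjm', rk, kth_filter_lt_card (by omega)]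

lemma B_image_sub_rk (hcard : B.card = m) (h0 : 0 ∈ B) :
    B.image (fun x => x - rk B x) = (range m).image (dd m n B) := by
  ext v
  simp only [mem_image, mem_range]
  constructor
  · rintro ⟨x, hx, rfl⟩
    obtain ⟨t, ht, rfl⟩ := kth_surj hx
    rw [hcard] at ht
    refine ⟨t, ht, ?_⟩
    rw [rk, kth_filter_lt_card (by omega), ← kth_eq_add_dd (n := n) hcard h0 ht]
    omega
  · rintro ⟨t, ht, rfl⟩
    refine ⟨kth B t, kth_mem (by omega), ?_⟩
    rw [rk, kth_filter_lt_card (by omega), ← kth_eq_add_dd (n := n) hcard h0 ht]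
    omega

lemma V'_filter_card (hsub : B ⊆ range (m+n)) (hcard : B.card = m) (hm : 1 ≤ m)
    (h0 : 0 ∈ B) {j : ℕ} (hj : j ≤ m) :
    (((range (m+1)).image (dd m n B)).filter (· < dd m n B j)).card
      = ((range j).filter (fun t => dd m n B t < dd m n B (t+1))).card :=
  card_filter_lt_image_monotone (dd_monotone hsub hcard hm h0) (by omega)

lemma V'_eq_insert (hsub : B ⊆ range (m+n)) (hcard : B.card = m) (hm : 1 ≤ m) (h0 : 0 ∈ B) :
    (range (m+1)).image (dd m n B)
      = insert n (((range (m+1)).image (dd m n B)).filter (· < n)) := by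
  ext v
  simp only [mem_insert, mem_filter, mem_image, mem_range]
  constructor
  · rintro ⟨t, ht, rfl⟩
    have := dd_le_n hsub hcard hm h0 t
    rcases this.lt_or_eq with h | h
    · exact Or.inr ⟨⟨t, ht, rfl⟩, h⟩
    · exact Or.inl h
  · rintro (rfl | ⟨⟨t, ht, rfl⟩, hlt⟩)
    · exact ⟨m, by omega, dd_ge le_rfl⟩
    · exact ⟨t, ht, rfl⟩

lemma V'_card (hsub : B ⊆ range (m+n)) (hcard : B.card = m) (hm : 1 ≤ m) (h0 : 0 ∈ B)
    (hlb : lb (m+n) B = i) :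
    ((range (m+1)).image (dd m n B)).card = i + 1 := by
  have hdm : dd m n B m = n := dd_ge le_rfl
  have h1 : (((range (m+1)).image (dd m n B)).filter (· < n)).card = i := by
    have := V'_filter_card hsub hcard hm h0 (le_refl m)
    rw [hdm] at this
    rw [this]
    exact asc_card hsub hcard hm h0 hlb
  rw [V'_eq_insert hsub hcard hm h0, card_insert_of_notMem (by simp), h1]

end PhiSide2

section PhiSide3

variable {m n i : ℕ} {B : Finset ℕ}

lemma mid_eq (hsub : B ⊆ range (m+n)) (hcard : B.card = m) (hm : 1 ≤ m) (h0 : 0 ∈ B) :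
    ((range m).image (dd m n B)).filter (fun v => 0 < v ∧ v < n)
      = ((range (m+1)).image (dd m n B)).filter (fun v => 0 < v ∧ v < n) := by
  ext v
  simp only [mem_filter, mem_image, mem_range]
  constructor
  · rintro ⟨⟨t, ht, rfl⟩, h⟩
    exact ⟨⟨t, by omega, rfl⟩, h⟩
  · rintro ⟨⟨t, ht, rfl⟩, h⟩
    rcases Nat.lt_or_ge t m with h' | h'
    · exact ⟨⟨t, h', rfl⟩, h⟩
    · rw [dd_ge h'] at h ⊢
      omega

lemma phi_snd_eq (hsub : B ⊆ range (m+n)) (hcard : B.card = m) (hm : 1 ≤ m) (h0 : 0 ∈ B) :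
    (phi n (m+n) B).2
      = (((range (m+1)).image (dd m n B)).filter (fun v => 0 < v ∧ v < n)).image (· - 1) := by
  show ((B.image (fun x => x - rk B x)).filter (fun v => 0 < v ∧ v < n)).image (· - 1) = _
  rw [B_image_sub_rk hcard h0, mid_eq hsub hcard hm h0]

lemma Vmid_card (hsub : B ⊆ range (m+n)) (hcard : B.card = m) (hm : 1 ≤ m) (hn : 1 ≤ n)
    (h0 : 0 ∈ B) (hlb : lb (m+n) B = i) :
    (((range (m+1)).image (dd m n B)).filter (fun v => 0 < v ∧ v < n)).card = i - 1 := by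
  have h0V : (0:ℕ) ∈ ((range (m+1)).image (dd m n B)).filter (· < n) := by
    refine mem_filter.mpr ⟨mem_image.mpr ⟨0, mem_range.mpr (by omega), dd_zero hm h0⟩, hn⟩
  have heq : ((range (m+1)).image (dd m n B)).filter (fun v => 0 < v ∧ v < n)
      = (((range (m+1)).image (dd m n B)).filter (· < n)).erase 0 := by
    ext v
    simp only [mem_erase, mem_filter]
    constructor
    · rintro ⟨h1, h2, h3⟩
      exact ⟨by omega, h1, h3⟩
    · rintro ⟨h1, h2, h3⟩
      exact ⟨h2, by omega, h3⟩
  have hfc : (((range (m+1)).image (dd m n B)).filter (· < n)).card = i := by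
    have h1 := V'_filter_card hsub hcard hm h0 (le_refl m)
    rw [dd_ge le_rfl] at h1
    rw [h1]
    exact asc_card hsub hcard hm h0 hlb
  rw [heq, card_erase_of_mem h0V, hfc]

lemma phi_snd_subset (hsub : B ⊆ range (m+n)) (hcard : B.card = m) (hm : 1 ≤ m)
    (h0 : 0 ∈ B) : (phi n (m+n) B).2 ⊆ range (n-1) := by
  rw [phi_snd_eq hsub hcard hm h0]
  intro x hx
  simp only [mem_image, mem_filter] at hx
  obtain ⟨v, ⟨-, h0v, hvn⟩, rfl⟩ := hx
  rw [mem_range]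
  omega

lemma phi_snd_card (hsub : B ⊆ range (m+n)) (hcard : B.card = m) (hm : 1 ≤ m) (hn : 1 ≤ n)
    (h0 : 0 ∈ B) (hlb : lb (m+n) B = i) : ((phi n (m+n) B).2).card = i - 1 := by
  rw [phi_snd_eq hsub hcard hm h0]
  rw [card_image_of_injOn, Vmid_card hsub hcard hm hn h0 hlb]
  intro a ha b hb hab
  have ha' : a ∈ ((range (m+1)).image (dd m n B)).filter (fun v => 0 < v ∧ v < n) := ha
  have hb' : b ∈ ((range (m+1)).image (dd m n B)).filter (fun v => 0 < v ∧ v < n) := hb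
  simp only [mem_filter] at ha' hb'
  have hab' : a - 1 = b - 1 := hab
  omega

lemma Sins_phi (hsub : B ⊆ range (m+n)) (hcard : B.card = m) (hm : 1 ≤ m) (h0 : 0 ∈ B) :
    Sins n ((phi n (m+n) B).2) = (range (m+1)).image (dd m n B) := by
  rw [phi_snd_eq hsub hcard hm h0, Sins, image_image]
  have himg : (((range (m+1)).image (dd m n B)).filter (fun v => 0 < v ∧ v < n)).image
      ((· + 1) ∘ (· - 1))
      = ((range (m+1)).image (dd m n B)).filter (fun v => 0 < v ∧ v < n) := by
    refine Eq.trans (image_congr (g := id) ?_) image_id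
    intro v hv
    obtain ⟨-, hv2⟩ := mem_filter.mp hv
    show v - 1 + 1 = v
    omega
  rw [himg]
  ext v
  simp only [mem_insert, mem_filter, mem_image, mem_range]
  constructor
  · rintro (rfl | rfl | ⟨⟨t, ht, rfl⟩, h⟩)
    · exact ⟨0, by omega, dd_zero hm h0⟩
    · exact ⟨m, by omega, dd_ge le_rfl⟩
    · exact ⟨t, ht, rfl⟩
  · rintro ⟨t, ht, rfl⟩
    have hle := dd_le_n hsub hcard hm h0 t
    rcases Nat.eq_zero_or_pos (dd m n B t) with h | h
    · exact Or.inl h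
    rcases hle.lt_or_eq with h' | h'
    · exact Or.inr (Or.inr ⟨⟨t, ht, rfl⟩, h, h'⟩)
    · exact Or.inr (Or.inl h')

lemma tJ_asc {j : ℕ} (hj : j ≤ m) :
    tJ ((range m).filter (fun t => dd m n B t < dd m n B (t+1))) j
      = ((range j).filter (fun t => dd m n B t < dd m n B (t+1))).card := by
  rw [tJ]
  congr 1
  ext t
  simp only [mem_filter, mem_range]
  constructor
  · rintro ⟨⟨h1, h2⟩, h3⟩
    exact ⟨h3, h2⟩
  · rintro ⟨h1, h2⟩
    exact ⟨⟨by omega, h2⟩, h1⟩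

lemma stair_eq_dd (hsub : B ⊆ range (m+n)) (hcard : B.card = m) (hm : 1 ≤ m) (h0 : 0 ∈ B)
    {j : ℕ} (hj : j ≤ m) :
    stair n ((range m).filter (fun t => dd m n B t < dd m n B (t+1))) ((phi n (m+n) B).2) j
      = dd m n B j := by
  rw [stair, Sins_phi hsub hcard hm h0, tJ_asc hj,
    ← V'_filter_card hsub hcard hm h0 hj]
  exact kth_rank (mem_image.mpr ⟨j, mem_range.mpr (by omega), rfl⟩)

lemma psi_phi (hsub : B ⊆ range (m+n)) (hcard : B.card = m) (hm : 1 ≤ m) (h0 : 0 ∈ B) :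
    psi m n ((range m).filter (fun t => dd m n B t < dd m n B (t+1))) ((phi n (m+n) B).2)
      = B := by
  rw [psi]
  have : ∀ j ∈ range m,
      j + stair n ((range m).filter (fun t => dd m n B t < dd m n B (t+1)))
        ((phi n (m+n) B).2) j = j + dd m n B j := by
    intro j hj
    rw [stair_eq_dd hsub hcard hm h0 (by have := mem_range.mp hj; omega)]
  rw [image_congr this]
  exact (B_eq_image hcard h0).symm

end PhiSide3

section Assembly

lemma main_nat {m n i : ℕ} (hm : 3 ≤ m) (hn : 3 ≤ n) (hi2 : 2 ≤ i) (him : i ≤ m)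
    (hin : i ≤ n) :
    (((range (m+n)).powersetCard m).filter (fun B => 0 ∈ B ∧ lb (m+n) B = i)).card
      = m.choose i * (n-1).choose (i-1) := by
  refine Eq.trans ?_ (by
    rw [card_product, card_powersetCard, card_powersetCard, card_range, card_range] :
      (((range m).powersetCard i) ×ˢ ((range (n-1)).powersetCard (i-1))).card
        = m.choose i * (n-1).choose (i-1))
  refine (Finset.card_bij (fun p _ => psi m n p.1 p.2) ?_ ?_ ?_).symm
  · rintro ⟨J, S⟩ hp
    rw [mem_product, mem_powersetCard, mem_powersetCard] at hp
    obtain ⟨⟨hJ, hJc⟩, hS, hSc⟩ := hp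
    have hcard : (Sins n S).card = i + 1 := Sins_card (by omega) (by omega) hS hSc
    refine mem_filter.mpr ⟨mem_powersetCard.mpr
      ⟨psi_subset_range hJc hS hcard, psi_card hJc hcard⟩,
      psi_zero_mem (by omega) hcard, lb_psi (by omega) (by omega) hJ hJc hS hcard⟩
  · rintro ⟨J1, S1⟩ h1 ⟨J2, S2⟩ h2 heq
    rw [mem_product, mem_powersetCard, mem_powersetCard] at h1 h2
    obtain ⟨⟨hJ1, hJc1⟩, hS1, hSc1⟩ := h1
    obtain ⟨⟨hJ2, hJc2⟩, hS2, hSc2⟩ := h2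
    have hcard1 : (Sins n S1).card = i + 1 := Sins_card (by omega) (by omega) hS1 hSc1
    have hcard2 : (Sins n S2).card = i + 1 := Sins_card (by omega) (by omega) hS2 hSc2
    have e1 := phi_psi (by omega) (by omega) hJ1 hJc1 hS1 hcard1
    simp only at heq
    rw [heq, phi_psi (by omega) (by omega) hJ2 hJc2 hS2 hcard2] at e1
    exact e1.symm
  · intro B hB
    rw [mem_filter, mem_powersetCard] at hB
    obtain ⟨⟨hsub, hcard⟩, h0, hlb⟩ := hB
    refine ⟨((range m).filter (fun t => dd m n B t < dd m n B (t+1)), (phi n (m+n) B).2),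
      ?_, ?_⟩
    · rw [mem_product, mem_powersetCard, mem_powersetCard]
      exact ⟨⟨filter_subset _ _, asc_card hsub hcard (by omega) h0 hlb⟩,
        phi_snd_subset hsub hcard (by omega) h0,
        phi_snd_card hsub hcard (by omega) (by omega) h0 hlb⟩
    · exact psi_phi hsub hcard (by omega) h0

end Assembly

section ZModStep

lemma blocks_val {N : ℕ} [NeZero N] (hN : 1 < N) {A : Finset (ZMod N)}
    (h0 : (0 : ZMod N) ∈ A) :
    lb N (A.image ZMod.val) = cyclicBlocks A := by
  haveI : Fact (1 < N) := ⟨hN⟩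
  have hinj := ZMod.val_injective N
  rw [cyclicBlocks, lb]
  have hset : (A.image ZMod.val).filter (fun a => a + 1 ∉ A.image ZMod.val ∧ a + 1 ≠ N)
      = (A.filter (fun a => a + 1 ∉ A)).image ZMod.val := by
    ext x
    simp only [mem_filter, mem_image]
    constructor
    · rintro ⟨⟨a, ha, rfl⟩, hq1, hq2⟩
      refine ⟨a, ⟨ha, ?_⟩, rfl⟩
      intro hmem
      have hvlt : a.val < N := ZMod.val_lt a
      have hlt : a.val + 1 < N := by omega
      have hval : (a+1).val = a.val + 1 := by
        rw [ZMod.val_add, ZMod.val_one, Nat.mod_eq_of_lt hlt]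
      exact hq1 ⟨a+1, hmem, hval⟩
    · rintro ⟨a, ⟨ha, hp⟩, rfl⟩
      have hvlt : a.val < N := ZMod.val_lt a
      refine ⟨⟨a, ha, rfl⟩, ?_, ?_⟩
      · rintro ⟨b, hb, hvb⟩
        have hvltb : b.val < N := ZMod.val_lt b
        have hlt : a.val + 1 < N := by omega
        have hval : (a+1).val = a.val + 1 := by
          rw [ZMod.val_add, ZMod.val_one, Nat.mod_eq_of_lt hlt]
        have : b = a + 1 := hinj (by rw [hval, hvb])
        exact hp (this ▸ hb)
      · intro hc
        have ha1 : a + 1 = 0 := by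
          have h1 : ((a.val : ℕ) : ZMod N) = a := ZMod.natCast_rightInverse a
          calc a + 1 = ((a.val + 1 : ℕ) : ZMod N) := by push_cast; rw [h1]
            _ = ((N : ℕ) : ZMod N) := by rw [hc]
            _ = 0 := ZMod.natCast_self N
        exact hp (ha1 ▸ h0)
  rw [hset, card_image_of_injective _ hinj]

lemma zmod_step {m n i : ℕ} [NeZero (m+n)] (hm : 3 ≤ m) (hn : 3 ≤ n) :
    (Finset.univ.filter (fun A : Finset (ZMod (m+n)) =>
        A.card = m ∧ cyclicBlocks A = i ∧ (0 : ZMod (m+n)) ∈ A)).card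
      = (((range (m+n)).powersetCard m).filter (fun B => 0 ∈ B ∧ lb (m+n) B = i)).card := by
  have hinj := ZMod.val_injective (m+n)
  apply Finset.card_bij (fun A _ => A.image ZMod.val)
  · intro A hA
    rw [mem_filter] at hA
    obtain ⟨-, hcard, hblocks, h0⟩ := hA
    rw [mem_filter, mem_powersetCard]
    refine ⟨⟨?_, ?_⟩, ?_, ?_⟩
    · intro x hx
      obtain ⟨a, -, rfl⟩ := mem_image.mp hx
      exact mem_range.mpr (ZMod.val_lt a)
    · rw [card_image_of_injective _ hinj, hcard]
    · exact mem_image.mpr ⟨0, h0, ZMod.val_zero⟩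
    · rw [blocks_val (by omega) h0]
      exact hblocks
  · intro A1 h1 A2 h2 heq
    exact Finset.image_injective hinj heq
  · intro B hB
    rw [mem_filter, mem_powersetCard] at hB
    obtain ⟨⟨hsub, hcardB⟩, h0B, hlbB⟩ := hB
    set A : Finset (ZMod (m+n)) := B.image (Nat.cast : ℕ → ZMod (m+n)) with hAdef
    have hval : A.image ZMod.val = B := by
      rw [hAdef, image_image]
      refine Eq.trans (image_congr (g := id) ?_) image_id
      intro b hb
      show ZMod.val ((b : ℕ) : ZMod (m+n)) = b
      exact ZMod.val_cast_of_lt (mem_range.mp (hsub hb))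
    have hinjOn : Set.InjOn (Nat.cast : ℕ → ZMod (m+n)) B := by
      intro a ha b hb hab
      have h1 : ZMod.val ((a : ℕ) : ZMod (m+n)) = a :=
        ZMod.val_cast_of_lt (mem_range.mp (hsub ha))
      have h2 : ZMod.val ((b : ℕ) : ZMod (m+n)) = b :=
        ZMod.val_cast_of_lt (mem_range.mp (hsub hb))
      rw [← h1, ← h2, hab]
    have hcardA : A.card = m := by
      rw [hAdef, card_image_of_injOn hinjOn, hcardB]
    have h0A : (0 : ZMod (m+n)) ∈ A := by
      rw [hAdef]
      exact mem_image.mpr ⟨0, h0B, Nat.cast_zero⟩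
    refine ⟨A, ?_, hval⟩
    rw [mem_filter]
    refine ⟨mem_univ _, hcardA, ?_, h0A⟩
    rw [← blocks_val (by omega) h0A, hval]
    exact hlbB

end ZModStep

end CSB
open CSB

/-- For `m, n ≥ 3` and `2 ≤ i ≤ min m n`, the number of subsets `A` of `ZMod (m+n)` with
`|A| = m`, exactly `i` cyclic blocks, and `0 ∈ A` equals `C(m, i) · C(n-1, i-1)`.
(These are the vertex sets of the `m`-cycles, containing the vertex `v₁ = 0`, occurring in
a pair of disjoint monotonic `m`- and `n`-cycles in `K_{m+n}` each with `i` interior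
edges.) -/
theorem count_subsets_with_blocks_containing_zero (m n i : ℕ)
    (hm : 3 ≤ m) (hn : 3 ≤ n) (hi2 : 2 ≤ i) (hi : i ≤ min m n) :
    Nat.card {A : Finset (ZMod (m + n)) //
        A.card = m ∧ cyclicBlocks A = i ∧ (0 : ZMod (m + n)) ∈ A}
      = m.choose i * (n - 1).choose (i - 1) := by
  haveI : NeZero (m + n) := ⟨by omega⟩
  rw [Nat.card_eq_fintype_card, Fintype.card_subtype]
  rw [CSB.zmod_step hm hn, CSB.main_nat hm hn hi2 (hi.trans (min_le_left m n))
    (hi.trans (min_le_right m n))]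
end

section
/- Let m, n ≥ 3 and 2 ≤ i ≤ min(m, n). The number of subsets A of ZMod (m+n) with |A| = m and exactly i cyclic blocks equals C(m, i) · C(n−1, i−1) + C(n, i) · C(m−1, i−1). Consequently, when m ≠ n this is the number of unordered pairs of disjoint monotonic cycles of lengths m and n in a book embedding of K_{m+n} each having i interior edges, and when m = n the number of such unordered pairs is half this quantity, namely C(n, i) · C(n−1, i−1). -/
def runsN (S : Finset ℕ) : ℕ := (S.filter fun a => a + 1 ∉ S).card

lemma runs_split (L : ℕ) (S : Finset ℕ) (hL : L ∉ S) :
    runsN S = (S.filter fun a => a + 1 ∉ S ∧ a + 1 ≠ L).card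
      + (if ∃ a ∈ S, a + 1 = L then 1 else 0) := by
  classical
  have h1 : S.filter (fun a => a + 1 ∉ S)
      = (S.filter fun a => a + 1 ∉ S ∧ a + 1 ≠ L) ∪ (S.filter fun a => a + 1 = L) := by
    ext b
    simp only [Finset.mem_filter, Finset.mem_union]
    constructor
    · rintro ⟨hb, hnb⟩
      by_cases h : b + 1 = L
      · exact Or.inr ⟨hb, h⟩
      · exact Or.inl ⟨hb, hnb, h⟩
    · rintro (⟨hb, hnb, _⟩ | ⟨hb, he⟩)
      · exact ⟨hb, hnb⟩
      · exact ⟨hb, he ▸ hL⟩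
  have hdisj : Disjoint (S.filter fun a => a + 1 ∉ S ∧ a + 1 ≠ L)
      (S.filter fun a => a + 1 = L) := by
    rw [Finset.disjoint_left]
    intro b hb1 hb2
    simp only [Finset.mem_filter] at hb1 hb2
    tauto
  rw [runsN, h1, Finset.card_union_of_disjoint hdisj]
  congr 1
  by_cases h : ∃ a ∈ S, a + 1 = L
  · obtain ⟨a0, ha0, he⟩ := h
    rw [if_pos ⟨a0, ha0, he⟩]
    have : S.filter (fun a => a + 1 = L) = {a0} := by
      ext b
      simp only [Finset.mem_filter, Finset.mem_singleton]
      constructor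
      · rintro ⟨hb, hbe⟩; omega
      · rintro rfl; exact ⟨ha0, he⟩
    rw [this, Finset.card_singleton]
  · rw [if_neg h, Finset.card_eq_zero, Finset.filter_eq_empty_iff]
    intro b hb hbe
    exact h ⟨b, hb, hbe⟩

lemma runs_insert (L : ℕ) (S : Finset ℕ) (hL : L ∉ S) (hlt : ∀ a ∈ S, a < L) :
    runsN (insert L S) = (S.filter fun a => a + 1 ∉ S ∧ a + 1 ≠ L).card + 1 := by
  classical
  have h1 : (insert L S).filter (fun a => a + 1 ∉ insert L S)
      = insert L (S.filter fun a => a + 1 ∉ S ∧ a + 1 ≠ L) := by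
    ext b
    simp only [Finset.mem_filter, Finset.mem_insert, not_or]
    constructor
    · rintro ⟨hb | hb, h2, h3⟩
      · exact Or.inl hb
      · exact Or.inr ⟨hb, h3, h2⟩
    · rintro (rfl | ⟨hb, h2, h3⟩)
      · exact ⟨Or.inl rfl, by omega, fun h => absurd (hlt _ h) (by omega)⟩
      · exact ⟨Or.inr hb, h3, h2⟩
  rw [runsN, h1, Finset.card_insert_of_notMem (by simp [hL])]

def feS (L m i : ℕ) : Finset (Finset ℕ) :=
  ((Finset.range L).powerset).filter fun S => S.card = m ∧ runsN S = i ∧ ∃ a ∈ S, a + 1 = L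
def foS (L m i : ℕ) : Finset (Finset ℕ) :=
  ((Finset.range L).powerset).filter fun S => S.card = m ∧ runsN S = i ∧ ¬ ∃ a ∈ S, a + 1 = L


lemma mem_feS {L m i : ℕ} {S : Finset ℕ} :
    S ∈ feS L m i ↔ (∀ a ∈ S, a < L) ∧ S.card = m ∧ runsN S = i ∧ ∃ a ∈ S, a + 1 = L := by
  simp [feS, Finset.mem_filter, Finset.mem_powerset, Finset.subset_iff]

lemma mem_foS {L m i : ℕ} {S : Finset ℕ} :
    S ∈ foS L m i ↔ (∀ a ∈ S, a < L) ∧ S.card = m ∧ runsN S = i ∧ ¬ ∃ a ∈ S, a + 1 = L := by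
  simp [foS, Finset.mem_filter, Finset.mem_powerset, Finset.subset_iff]

lemma feS_foS_disjoint (L m i j : ℕ) : Disjoint (feS L m i) (foS L m j) := by
  rw [Finset.disjoint_left]
  intro S h1 h2
  rw [mem_feS] at h1; rw [mem_foS] at h2
  exact h2.2.2.2 h1.2.2.2

lemma fo_rec (L m i : ℕ) :
    (foS (L + 1) m i).card = (feS L m i).card + (foS L m i).card := by
  classical
  have : foS (L + 1) m i = feS L m i ∪ foS L m i := by
    ext S
    rw [mem_foS, Finset.mem_union, mem_feS, mem_foS]
    constructor
    · rintro ⟨hlt, hc, hr, hne⟩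
      have hlt' : ∀ a ∈ S, a < L := by
        intro a ha
        have := hlt a ha
        rcases Nat.lt_or_ge a L with h | h
        · exact h
        · exact absurd ⟨a, ha, by omega⟩ hne
      by_cases h : ∃ a ∈ S, a + 1 = L
      · exact Or.inl ⟨hlt', hc, hr, h⟩
      · exact Or.inr ⟨hlt', hc, hr, h⟩
    · rintro (⟨hlt, hc, hr, he⟩ | ⟨hlt, hc, hr, he⟩)
      · exact ⟨fun a ha => Nat.lt_succ_of_lt (hlt a ha), hc, hr,
          fun ⟨a, ha, hae⟩ => absurd (hlt a ha) (by omega)⟩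
      · exact ⟨fun a ha => Nat.lt_succ_of_lt (hlt a ha), hc, hr,
          fun ⟨a, ha, hae⟩ => absurd (hlt a ha) (by omega)⟩
  rw [this, Finset.card_union_of_disjoint (feS_foS_disjoint L m i i)]

lemma fe_rec (L m i : ℕ) :
    (feS (L + 1) (m + 1) (i + 1)).card = (feS L m (i + 1)).card + (foS L m i).card := by
  classical
  rw [← Finset.card_union_of_disjoint (feS_foS_disjoint L m (i+1) i)]
  refine Finset.card_bij' (fun S _ => S.erase L) (fun S' _ => insert L S') ?hi ?hj ?li ?ri
  case hi =>
    intro S hS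
    rw [mem_feS] at hS
    obtain ⟨hlt, hc, hr, ⟨a, ha, hae⟩⟩ := hS
    have hLS : L ∈ S := by
      have := hlt a ha
      have : a = L := by omega
      exact this ▸ ha
    have hL' : L ∉ S.erase L := Finset.notMem_erase _ _
    have hlt' : ∀ b ∈ S.erase L, b < L := by
      intro b hb
      have h1 := Finset.mem_of_mem_erase hb
      have h2 := Finset.ne_of_mem_erase hb
      have := hlt b h1; omega
    have hins : insert L (S.erase L) = S := Finset.insert_erase hLS
    have hri := runs_insert L (S.erase L) hL' hlt'
    rw [hins, hr] at hri
    have hrs := runs_split L (S.erase L) hL'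
    have hc' : (S.erase L).card = m := by
      rw [Finset.card_erase_of_mem hLS, hc]
      omega
    show S.erase L ∈ _
    rw [Finset.mem_union, mem_feS, mem_foS]
    by_cases h : ∃ b ∈ S.erase L, b + 1 = L
    · rw [if_pos h] at hrs
      exact Or.inl ⟨hlt', hc', by omega, h⟩
    · rw [if_neg h] at hrs
      exact Or.inr ⟨hlt', hc', by omega, h⟩
  case hj =>
    intro S' hS'
    rw [Finset.mem_union, mem_feS, mem_foS] at hS'
    have hlt' : ∀ b ∈ S', b < L := by rcases hS' with ⟨h, _⟩ | ⟨h, _⟩ <;> exact h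
    have hL' : L ∉ S' := fun h => absurd (hlt' L h) (by omega)
    have hri := runs_insert L S' hL' hlt'
    have hrs := runs_split L S' hL'
    show insert L S' ∈ _
    rw [mem_feS]
    refine ⟨?_, ?_, ?_, ⟨L, Finset.mem_insert_self _ _, rfl⟩⟩
    · intro b hb
      rcases Finset.mem_insert.mp hb with rfl | hb
      · omega
      · exact Nat.lt_succ_of_lt (hlt' b hb)
    · rw [Finset.card_insert_of_notMem hL']
      rcases hS' with ⟨_, hc, _⟩ | ⟨_, hc, _⟩ <;> omega
    · rcases hS' with ⟨_, _, hr, he⟩ | ⟨_, _, hr, he⟩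
      · rw [if_pos he] at hrs; omega
      · rw [if_neg he] at hrs; omega
  case li =>
    intro S hS
    rw [mem_feS] at hS
    obtain ⟨hlt, _, _, ⟨a, ha, hae⟩⟩ := hS
    have hLS : L ∈ S := by
      have := hlt a ha
      have : a = L := by omega
      exact this ▸ ha
    show insert L (S.erase L) = S
    exact Finset.insert_erase hLS
  case ri =>
    intro S' hS'
    rw [Finset.mem_union, mem_feS, mem_foS] at hS'
    have hlt' : ∀ b ∈ S', b < L := by rcases hS' with ⟨h, _⟩ | ⟨h, _⟩ <;> exact h
    show (insert L S').erase L = S'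
    exact Finset.erase_insert (fun h => absurd (hlt' L h) (by omega))

lemma feS_zero_L (m i : ℕ) : feS 0 m i = ∅ := by
  ext S; rw [mem_feS]; simp

lemma foS_zero_L (m i : ℕ) : (foS 0 m i).card = if m = 0 ∧ i = 0 then 1 else 0 := by
  classical
  have : foS 0 m i = if m = 0 ∧ i = 0 then {∅} else ∅ := by
    split_ifs with h
    · obtain ⟨rfl, rfl⟩ := h
      ext S
      rw [mem_foS, Finset.mem_singleton]
      constructor
      · rintro ⟨hlt, hc, _, _⟩
        exact Finset.card_eq_zero.mp hc
      · rintro rfl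
        simp [runsN]
    · ext S
      rw [mem_foS]
      simp only [Finset.notMem_empty, iff_false]
      rintro ⟨hlt, hc, hr, _⟩
      have : S = ∅ := by
        rw [Finset.eq_empty_iff_forall_notMem]
        intro a ha; exact absurd (hlt a ha) (by omega)
      subst this
      simp [runsN] at hc hr
      exact h ⟨hc.symm, hr.symm⟩
  rw [this]; split_ifs <;> simp

lemma feS_zero_m (L i : ℕ) : feS L 0 i = ∅ := by
  ext S
  rw [mem_feS]
  simp only [Finset.notMem_empty, iff_false]
  rintro ⟨_, hc, _, ⟨a, ha, _⟩⟩
  rw [Finset.card_eq_zero] at hc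
  subst hc
  exact absurd ha (Finset.notMem_empty a)

lemma feS_zero_i (L m : ℕ) : feS L m 0 = ∅ := by
  ext S
  rw [mem_feS]
  simp only [Finset.notMem_empty, iff_false]
  rintro ⟨hlt, _, hr, ⟨a, ha, hae⟩⟩
  have hmem : a ∈ S.filter (fun b => b + 1 ∉ S) := by
    rw [Finset.mem_filter]
    exact ⟨ha, fun h => absurd (hlt _ h) (by omega)⟩
  rw [runsN, Finset.card_eq_zero] at hr
  rw [hr] at hmem
  exact absurd hmem (Finset.notMem_empty a)

def eVal (L m i : ℕ) : ℕ :=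
  if 1 ≤ m ∧ 1 ≤ i ∧ m ≤ L then (m-1).choose (i-1) * (L-m).choose (i-1) else 0
def oVal (L m i : ℕ) : ℕ :=
  if m = 0 then (if i = 0 then 1 else 0)
  else if i = 0 then 0 else (m-1).choose (i-1) * (L-m).choose i

lemma eVal_rec (L m i : ℕ) : eVal (L+1) (m+1) (i+1) = eVal L m (i+1) + oVal L m i := by
  rcases Nat.eq_zero_or_pos m with rfl | hm
  · rcases Nat.eq_zero_or_pos i with rfl | hi
    · simp [eVal, oVal]
    · simp only [eVal, oVal, if_pos rfl, if_neg hi.ne', Nat.add_sub_cancel,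
        Nat.choose_eq_zero_of_lt hi, Nat.zero_mul]
      rw [if_pos (by omega), if_neg (by omega)]
      simp
  · obtain ⟨a, rfl⟩ : ∃ a, m = a + 1 := ⟨m-1, by omega⟩
    rcases Nat.eq_zero_or_pos i with rfl | hi
    · simp only [eVal, oVal, if_neg (Nat.succ_ne_zero a), if_pos rfl, Nat.add_sub_cancel]
      by_cases hmL : a + 1 ≤ L
      · rw [if_pos (by omega), if_pos (by omega)]
        simp
      · rw [if_neg (by omega), if_neg (by omega)]
        simp
    · obtain ⟨b, rfl⟩ : ∃ b, i = b + 1 := ⟨i-1, by omega⟩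
      simp only [eVal, oVal, if_neg (Nat.succ_ne_zero a), if_neg (Nat.succ_ne_zero b),
        Nat.add_sub_cancel]
      by_cases hmL : a + 1 ≤ L
      · rw [if_pos (by omega), if_pos (by omega)]
        have hsub : L + 1 - (a + 1 + 1) = L - (a + 1) := by omega
        rw [hsub, Nat.choose_succ_succ a b, Nat.add_mul]
        simp only [Nat.succ_eq_add_one]
        ring
      · rw [if_neg (by omega), if_neg (by omega)]
        have : L - (a + 1) = 0 := by omega
        rw [this, Nat.choose_eq_zero_of_lt (by omega : 0 < b + 1)]
        simp

lemma oVal_rec (L m i : ℕ) : oVal (L+1) m i = eVal L m i + oVal L m i := by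
  rcases Nat.eq_zero_or_pos m with rfl | hm
  · simp [eVal, oVal]
  · rcases Nat.eq_zero_or_pos i with rfl | hi
    · simp [oVal, eVal, hm.ne']
    · obtain ⟨a, rfl⟩ : ∃ a, m = a + 1 := ⟨m-1, by omega⟩
      obtain ⟨b, rfl⟩ : ∃ b, i = b + 1 := ⟨i-1, by omega⟩
      simp only [oVal, eVal, if_neg (Nat.succ_ne_zero a), if_neg (Nat.succ_ne_zero b),
        Nat.add_sub_cancel]
      by_cases hmL : a + 1 ≤ L
      · rw [if_pos (by omega)]
        have hsub : L + 1 - (a + 1) = (L - (a + 1)) + 1 := by omega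
        rw [hsub, Nat.choose_succ_succ (L - (a + 1)) b, Nat.mul_add]
      · rw [if_neg (by omega)]
        have h2 : L + 1 - (a + 1) = 0 ∨ L + 1 - (a + 1) = 0 := by
          rcases Nat.lt_or_ge L (a + 1) with h | h
          · left; omega
          · left; omega
        have h3 : L - (a + 1) = 0 := by omega
        have h4 : L + 1 - (a + 1) = 0 ∨ L + 1 - (a + 1) = L - a := by omega
        rcases h4 with h4 | h4
        · rw [h4, h3, Nat.choose_eq_zero_of_lt (by omega : 0 < b + 1)]
          simp
        · -- here L + 1 - (a+1) = L - a; but hmL fails so L < a + 1, L - a = 0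
          have : L + 1 - (a + 1) = 0 ∨ L - a = 0 := by omega
          rw [h4, h3]
          have h5 : L - a = 0 ∨ L - a = 1 := by omega
          rcases h5 with h5 | h5
          · rw [h5, Nat.choose_eq_zero_of_lt (by omega : 0 < b + 1)]
            simp
          ·
            omega

lemma fefo_card (L : ℕ) :
    ∀ m i, (feS L m i).card = eVal L m i ∧ (foS L m i).card = oVal L m i := by
  induction L with
  | zero =>
    intro m i
    constructor
    · rw [feS_zero_L, Finset.card_empty, eVal, if_neg (by omega)]
    · rw [foS_zero_L, oVal]
      rcases Nat.eq_zero_or_pos m with rfl | hm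
      · simp
      · rw [if_neg (by omega), if_neg hm.ne']
        rcases Nat.eq_zero_or_pos i with rfl | hi
        · simp
        · have h0 : (0:ℕ) - m = 0 := by omega
          rw [if_neg hi.ne', h0, Nat.choose_eq_zero_of_lt hi, Nat.mul_zero]
    | succ L IH =>
      intro m i
      constructor
      · rcases Nat.eq_zero_or_pos m with rfl | hm
        · rw [feS_zero_m, Finset.card_empty, eVal, if_neg (by omega)]
        · rcases Nat.eq_zero_or_pos i with rfl | hi
          · rw [feS_zero_i, Finset.card_empty, eVal, if_neg (by omega)]
          · obtain ⟨a, rfl⟩ : ∃ a, m = a + 1 := ⟨m-1, by omega⟩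
            obtain ⟨b, rfl⟩ : ∃ b, i = b + 1 := ⟨i-1, by omega⟩
            rw [fe_rec, (IH a (b+1)).1, (IH a b).2, eVal_rec]
      · rw [fo_rec, (IH m i).1, (IH m i).2, oVal_rec]

lemma linear_count (L m i : ℕ) (hm : 1 ≤ m) (hi : 1 ≤ i) (hmL : m ≤ L) :
    (((Finset.range L).powerset).filter fun S => S.card = m ∧ runsN S = i).card
      = (m-1).choose (i-1) * ((L-m)+1).choose i := by
  classical
  have hsplit : ((Finset.range L).powerset).filter (fun S => S.card = m ∧ runsN S = i)
      = feS L m i ∪ foS L m i := by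
    ext S
    rw [Finset.mem_filter, Finset.mem_powerset, Finset.mem_union, mem_feS, mem_foS]
    constructor
    · rintro ⟨hsub, hc, hr⟩
      have hlt : ∀ a ∈ S, a < L := fun a ha => Finset.mem_range.mp (hsub ha)
      by_cases h : ∃ a ∈ S, a + 1 = L
      · exact Or.inl ⟨hlt, hc, hr, h⟩
      · exact Or.inr ⟨hlt, hc, hr, h⟩
    · rintro (⟨hlt, hc, hr, -⟩ | ⟨hlt, hc, hr, -⟩) <;>
        exact ⟨fun a ha => Finset.mem_range.mpr (hlt a ha), hc, hr⟩
  rw [hsplit, Finset.card_union_of_disjoint (feS_foS_disjoint L m i i),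
    (fefo_card L m i).1, (fefo_card L m i).2, eVal, oVal,
    if_pos ⟨hm, hi, hmL⟩, if_neg (by omega), if_neg (by omega)]
  obtain ⟨b, rfl⟩ : ∃ b, i = b + 1 := ⟨i-1, by omega⟩
  rw [Nat.choose_succ_succ (L-m) b, Nat.add_sub_cancel, Nat.mul_add]


section Cyc
variable {N : ℕ} [NeZero N]

def fmap (N : ℕ) : ℕ → ZMod N := fun x => ((x+1 : ℕ) : ZMod N)
def gmap {N : ℕ} : ZMod N → ℕ := fun a => a.val - 1

lemma val_fmap {x : ℕ} (hx : x < N - 1) : (fmap N x).val = x + 1 :=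
  ZMod.val_cast_of_lt (by have := Nat.pos_of_ne_zero (NeZero.ne N); omega)

lemma fmap_injOn {S : Finset ℕ} (hS : ∀ x ∈ S, x < N - 1) : Set.InjOn (fmap N) S := by
  intro x hx y hy h
  have h1 := val_fmap (N := N) (hS x hx)
  have h2 := val_fmap (N := N) (hS y hy)
  have : (fmap N x).val = (fmap N y).val := by rw [h]
  omega

lemma fmap_ne_zero {x : ℕ} (hx : x < N - 1) : fmap N x ≠ 0 := by
  intro h
  have := val_fmap (N := N) hx
  rw [h, ZMod.val_zero] at this
  omega

lemma adj_iff {S : Finset ℕ} (hS : ∀ x ∈ S, x < N - 1) {x : ℕ} (hx : x ∈ S) :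
    fmap N x + 1 ∈ S.image (fmap N) ↔ x + 1 ∈ S := by
  have hN := Nat.pos_of_ne_zero (NeZero.ne N)
  have hfx : fmap N x + 1 = ((x + 2 : ℕ) : ZMod N) := by
    simp [fmap]
    ring
  constructor
  · rintro h
    rw [Finset.mem_image] at h
    obtain ⟨y, hy, hfy⟩ := h
    rw [hfx] at hfy
    have h1 := val_fmap (N := N) (hS y hy)
    have hxlt := hS x hx
    by_cases h2 : x + 2 < N
    · have h3 : ((x + 2 : ℕ) : ZMod N).val = x + 2 := ZMod.val_cast_of_lt h2
      have : (fmap N y).val = ((x + 2 : ℕ) : ZMod N).val := by rw [hfy]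
      rw [h1, h3] at this
      have : y = x + 1 := by omega
      rwa [← this]
    · have hx2 : x + 2 = N := by omega
      have : ((x + 2 : ℕ) : ZMod N) = 0 := by
        rw [hx2]; exact ZMod.natCast_self N
      rw [this] at hfy
      exact absurd hfy (fmap_ne_zero (hS y hy))
  · intro h
    rw [Finset.mem_image]
    refine ⟨x + 1, h, ?_⟩
    rw [hfx]
    have := hS _ h
    simp [fmap]
    ring

lemma blocks_image {S : Finset ℕ} (hS : ∀ x ∈ S, x < N - 1) :
    cyclicBlocks (S.image (fmap N)) = runsN S := by
  classical
  have hset : (S.image (fmap N)).filter (fun a => a + 1 ∉ S.image (fmap N))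
      = (S.filter fun x => x + 1 ∉ S).image (fmap N) := by
    ext c
    simp only [Finset.mem_filter, Finset.mem_image]
    constructor
    · rintro ⟨⟨x, hx, rfl⟩, hc⟩
      exact ⟨x, ⟨hx, fun h => hc (Finset.mem_image.mp ((adj_iff hS hx).mpr h))⟩, rfl⟩
    · rintro ⟨x, ⟨hx, hnx⟩, rfl⟩
      exact ⟨⟨x, hx, rfl⟩, fun h => hnx ((adj_iff hS hx).mp (Finset.mem_image.mpr h))⟩
  rw [cyclicBlocks, hset,
    Finset.card_image_of_injOn (fmap_injOn (fun x hx => hS x (Finset.mem_of_mem_filter x hx))),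
    runsN]

lemma image_fmap_gmap {S : Finset ℕ} (hS : ∀ x ∈ S, x < N - 1) :
    (S.image (fmap N)).image gmap = S := by
  rw [Finset.image_image]
  have : ∀ x ∈ S, (gmap ∘ fmap N) x = id x := by
    intro x hx
    simp only [Function.comp, gmap, id]
    rw [val_fmap (hS x hx)]
    omega
  rw [Finset.image_congr this, Finset.image_id]

lemma image_gmap_fmap {A : Finset (ZMod N)} (h0 : (0 : ZMod N) ∉ A) :
    (A.image gmap).image (fmap N) = A := by
  rw [Finset.image_image]
  have : ∀ a ∈ A, (fmap N ∘ gmap) a = id a := by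
    intro a ha
    have hv : a.val ≠ 0 := fun h => h0 ((ZMod.val_eq_zero a).mp h ▸ ha)
    simp only [Function.comp, fmap, gmap, id]
    have : a.val - 1 + 1 = a.val := by omega
    rw [this]
    exact ZMod.natCast_rightInverse a
  rw [Finset.image_congr this, Finset.image_id]

lemma gmap_mem {A : Finset (ZMod N)} (h0 : (0 : ZMod N) ∉ A) :
    ∀ x ∈ A.image gmap, x < N - 1 := by
  intro x hx
  rw [Finset.mem_image] at hx
  obtain ⟨a, ha, rfl⟩ := hx
  have hv : a.val ≠ 0 := fun h => h0 ((ZMod.val_eq_zero a).mp h ▸ ha)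
  have := ZMod.val_lt a
  simp only [gmap]
  omega

lemma gmap_card {A : Finset (ZMod N)} (h0 : (0 : ZMod N) ∉ A) :
    (A.image gmap).card = A.card := by
  apply Finset.card_image_of_injOn
  intro a ha b hb h
  have hva : a.val ≠ 0 := fun h => h0 ((ZMod.val_eq_zero a).mp h ▸ ha)
  have hvb : b.val ≠ 0 := fun h => h0 ((ZMod.val_eq_zero b).mp h ▸ hb)
  simp only [gmap] at h
  exact ZMod.val_injective N (by omega)

lemma cyc_count_eq_linear (m i : ℕ) :
    (Finset.univ.filter fun A : Finset (ZMod N) =>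
        A.card = m ∧ cyclicBlocks A = i ∧ (0 : ZMod N) ∉ A).card
      = (((Finset.range (N-1)).powerset).filter fun S => S.card = m ∧ runsN S = i).card := by
  classical
  apply Finset.card_nbij' (fun A => A.image gmap) (fun S => S.image (fmap N))
  · intro A hA
    rw [Finset.mem_coe, Finset.mem_filter] at hA
    obtain ⟨-, hc, hb, h0⟩ := hA
    rw [Finset.mem_coe, Finset.mem_filter, Finset.mem_powerset]
    refine ⟨fun x hx => Finset.mem_range.mpr (gmap_mem h0 x hx), by rw [gmap_card h0, hc], ?_⟩
    have := blocks_image (N := N) (gmap_mem h0)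
    rw [image_gmap_fmap h0] at this
    dsimp only
    omega
  · intro S hS
    rw [Finset.mem_coe, Finset.mem_filter, Finset.mem_powerset] at hS
    obtain ⟨hsub, hc, hr⟩ := hS
    have hS' : ∀ x ∈ S, x < N - 1 := fun x hx => Finset.mem_range.mp (hsub hx)
    rw [Finset.mem_coe, Finset.mem_filter]
    refine ⟨Finset.mem_univ _, ?_, ?_, ?_⟩
    · rw [Finset.card_image_of_injOn (fmap_injOn hS'), hc]
    · rw [blocks_image hS', hr]
    · intro h
      rw [Finset.mem_image] at h
      obtain ⟨x, hx, hfx⟩ := h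
      exact fmap_ne_zero (hS' x hx) hfx
  · intro A hA
    rw [Finset.mem_coe, Finset.mem_filter] at hA
    exact image_gmap_fmap hA.2.2.2
  · intro S hS
    rw [Finset.mem_coe, Finset.mem_filter, Finset.mem_powerset] at hS
    exact image_fmap_gmap (fun x hx => Finset.mem_range.mp (hS.1 hx))
end Cyc


section Compl
variable {N : ℕ} [NeZero N]

lemma shift_count (A : Finset (ZMod N)) :
    (Finset.univ.filter fun x => x ∈ A ∧ x + 1 ∉ A).card
      = (Finset.univ.filter fun x => x ∉ A ∧ x + 1 ∈ A).card := by
  classical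
  have key : (Finset.univ.filter fun x : ZMod N => x ∈ A).card
      = (Finset.univ.filter fun x : ZMod N => x + 1 ∈ A).card := by
    apply Finset.card_nbij' (fun x => x - 1) (fun x => x + 1)
    · intro x hx
      simp only [Finset.mem_coe, Finset.mem_filter, Finset.mem_univ, true_and] at *
      rwa [sub_add_cancel]
    · intro x hx
      simp only [Finset.mem_coe, Finset.mem_filter, Finset.mem_univ, true_and] at *
      exact hx
    · intro x _; ring
    · intro x _; ring
  have h1 := Finset.card_filter_add_card_filter_not
    (s := Finset.univ.filter fun x : ZMod N => x ∈ A) (p := fun x => x + 1 ∈ A)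
  have h2 := Finset.card_filter_add_card_filter_not
    (s := Finset.univ.filter fun x : ZMod N => x + 1 ∈ A) (p := fun x => x ∈ A)
  rw [Finset.filter_filter, Finset.filter_filter] at h1 h2
  have e1 : (Finset.univ.filter fun x : ZMod N => x ∈ A ∧ x + 1 ∈ A)
      = (Finset.univ.filter fun x : ZMod N => x + 1 ∈ A ∧ x ∈ A) := by
    apply Finset.filter_congr; intro x _; constructor <;> exact fun h => ⟨h.2, h.1⟩
  have e2 : (Finset.univ.filter fun x : ZMod N => x ∈ A ∧ ¬ x + 1 ∈ A)
      = (Finset.univ.filter fun x : ZMod N => x ∈ A ∧ x + 1 ∉ A) := rfl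
  have e3 : (Finset.univ.filter fun x : ZMod N => x + 1 ∈ A ∧ ¬ x ∈ A)
      = (Finset.univ.filter fun x : ZMod N => x ∉ A ∧ x + 1 ∈ A) := by
    apply Finset.filter_congr; intro x _; constructor <;> exact fun h => ⟨h.2, h.1⟩
  rw [← e1, e3] at h2
  omega

lemma filter_univ_mem (A : Finset (ZMod N)) (p : ZMod N → Prop) [DecidablePred p] :
    (A.filter p).card = (Finset.univ.filter fun x => x ∈ A ∧ p x).card := by
  congr 1
  ext x
  simp [Finset.mem_filter]

lemma blocks_compl (A : Finset (ZMod N)) : cyclicBlocks Aᶜ = cyclicBlocks A := by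
  classical
  rw [cyclicBlocks, cyclicBlocks, filter_univ_mem Aᶜ (fun a => a + 1 ∉ Aᶜ), filter_univ_mem A (fun a => a + 1 ∉ A)]
  have e : (Finset.univ.filter fun x : ZMod N => x ∈ Aᶜ ∧ x + 1 ∉ Aᶜ)
      = (Finset.univ.filter fun x : ZMod N => x ∉ A ∧ x + 1 ∈ A) := by
    apply Finset.filter_congr; intro x _
    simp [Finset.mem_compl]
  rw [e, ← shift_count]

lemma compl_count (a b i : ℕ) (hab : a + b = N) :
    (Finset.univ.filter fun A : Finset (ZMod N) =>
        A.card = a ∧ cyclicBlocks A = i ∧ (0 : ZMod N) ∈ A).card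
      = (Finset.univ.filter fun B : Finset (ZMod N) =>
        B.card = b ∧ cyclicBlocks B = i ∧ (0 : ZMod N) ∉ B).card := by
  classical
  apply Finset.card_nbij' (fun A => Aᶜ) (fun B => Bᶜ)
  · intro A hA
    rw [Finset.mem_coe, Finset.mem_filter] at hA ⊢
    obtain ⟨-, hc, hb, h0⟩ := hA
    refine ⟨Finset.mem_univ _, ?_, ?_, ?_⟩
    · rw [Finset.card_compl, ZMod.card, hc]; omega
    · rw [blocks_compl, hb]
    · simp [Finset.mem_compl, h0]
  · intro B hB
    rw [Finset.mem_coe, Finset.mem_filter] at hB ⊢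
    obtain ⟨-, hc, hb, h0⟩ := hB
    refine ⟨Finset.mem_univ _, ?_, ?_, ?_⟩
    · rw [Finset.card_compl, ZMod.card, hc]; omega
    · rw [blocks_compl, hb]
    · simp [Finset.mem_compl, h0]
  · intro A _; exact compl_compl A
  · intro B _; exact compl_compl B
end Compl

/-- For `m, n ≥ 3` and `2 ≤ i ≤ min m n`, the number of subsets `A` of `ZMod (m+n)` with
`|A| = m` and exactly `i` cyclic blocks equals `C(m,i)·C(n-1,i-1) + C(n,i)·C(m-1,i-1)`.
When `m ≠ n` this is the number of unordered pairs of disjoint monotonic cycles of lengths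
`m` and `n` in a book embedding of `K_{m+n}` each with `i` interior edges; when `m = n`
the number of such unordered pairs (each represented by its unique member containing the
vertex `0`) is half this quantity, namely `C(n,i)·C(n-1,i-1)`. -/
theorem count_subsets_with_blocks (m n i : ℕ)
    (hm : 3 ≤ m) (hn : 3 ≤ n) (hi2 : 2 ≤ i) (hi : i ≤ min m n) :
    Nat.card {A : Finset (ZMod (m + n)) // A.card = m ∧ cyclicBlocks A = i}
      = m.choose i * (n - 1).choose (i - 1) + n.choose i * (m - 1).choose (i - 1)
    ∧ (m = n →
      Nat.card {A : Finset (ZMod (m + n)) //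
          A.card = n ∧ cyclicBlocks A = i ∧ (0 : ZMod (m + n)) ∈ A}
        = n.choose i * (n - 1).choose (i - 1)) := by
  classical
  haveI : NeZero (m + n) := ⟨by omega⟩
  have him : i ≤ m := le_trans hi (Nat.min_le_left m n)
  have hin : i ≤ n := le_trans hi (Nat.min_le_right m n)
  have hcard1 : Nat.card {A : Finset (ZMod (m + n)) // A.card = m ∧ cyclicBlocks A = i}
      = (Finset.univ.filter fun A : Finset (ZMod (m + n)) =>
          A.card = m ∧ cyclicBlocks A = i).card := by
    rw [Nat.card_eq_fintype_card, Fintype.card_subtype]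
  have hcard2 : Nat.card {A : Finset (ZMod (m + n)) //
        A.card = n ∧ cyclicBlocks A = i ∧ (0 : ZMod (m + n)) ∈ A}
      = (Finset.univ.filter fun A : Finset (ZMod (m + n)) =>
          A.card = n ∧ cyclicBlocks A = i ∧ (0 : ZMod (m + n)) ∈ A).card := by
    rw [Nat.card_eq_fintype_card, Fintype.card_subtype]
  have hsplit : (Finset.univ.filter fun A : Finset (ZMod (m + n)) =>
        A.card = m ∧ cyclicBlocks A = i).card
      = (Finset.univ.filter fun A : Finset (ZMod (m + n)) =>
          A.card = m ∧ cyclicBlocks A = i ∧ (0 : ZMod (m + n)) ∈ A).card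
        + (Finset.univ.filter fun A : Finset (ZMod (m + n)) =>
          A.card = m ∧ cyclicBlocks A = i ∧ (0 : ZMod (m + n)) ∉ A).card := by
    have h := Finset.card_filter_add_card_filter_not
      (s := Finset.univ.filter fun A : Finset (ZMod (m + n)) =>
        A.card = m ∧ cyclicBlocks A = i)
      (p := fun A => (0 : ZMod (m + n)) ∈ A)
    rw [Finset.filter_filter, Finset.filter_filter] at h
    have e1 : (Finset.univ.filter fun A : Finset (ZMod (m + n)) =>
          (A.card = m ∧ cyclicBlocks A = i) ∧ (0 : ZMod (m + n)) ∈ A)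
        = (Finset.univ.filter fun A : Finset (ZMod (m + n)) =>
          A.card = m ∧ cyclicBlocks A = i ∧ (0 : ZMod (m + n)) ∈ A) := by
      apply Finset.filter_congr; intro A _; tauto
    have e2 : (Finset.univ.filter fun A : Finset (ZMod (m + n)) =>
          (A.card = m ∧ cyclicBlocks A = i) ∧ ¬ (0 : ZMod (m + n)) ∈ A)
        = (Finset.univ.filter fun A : Finset (ZMod (m + n)) =>
          A.card = m ∧ cyclicBlocks A = i ∧ (0 : ZMod (m + n)) ∉ A) := by
      apply Finset.filter_congr; intro A _; tauto
    rw [e1, e2] at h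
    omega
  have hA0 : (Finset.univ.filter fun A : Finset (ZMod (m + n)) =>
        A.card = m ∧ cyclicBlocks A = i ∧ (0 : ZMod (m + n)) ∉ A).card
      = (m - 1).choose (i - 1) * n.choose i := by
    rw [cyc_count_eq_linear, linear_count (m + n - 1) m i (by omega) (by omega) (by omega)]
    have : (m + n - 1) - m + 1 = n := by omega
    rw [this]
  have hA1 : (Finset.univ.filter fun A : Finset (ZMod (m + n)) =>
        A.card = m ∧ cyclicBlocks A = i ∧ (0 : ZMod (m + n)) ∈ A).card
      = (n - 1).choose (i - 1) * m.choose i := by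
    rw [compl_count m n i rfl, cyc_count_eq_linear,
      linear_count (m + n - 1) n i (by omega) (by omega) (by omega)]
    have : (m + n - 1) - n + 1 = m := by omega
    rw [this]
  have hB : (Finset.univ.filter fun A : Finset (ZMod (m + n)) =>
        A.card = n ∧ cyclicBlocks A = i ∧ (0 : ZMod (m + n)) ∈ A).card
      = (m - 1).choose (i - 1) * n.choose i := by
    rw [compl_count n m i (by omega), cyc_count_eq_linear,
      linear_count (m + n - 1) m i (by omega) (by omega) (by omega)]
    have : (m + n - 1) - m + 1 = n := by omega
    rw [this]
  constructor
  · rw [hcard1, hsplit, hA1, hA0]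
    ring
  · intro hmn
    rw [hcard2, hB, hmn]
    ring
end

section
/- For every n ≥ 3, the rational number M(n) := (∑_{i=2}^{n} (i/6) · C(n, i) · C(n−1, i−1)) / C(2n−1, n−1) satisfies M(n) = (n/6) · ( n/(2n−1) − 1/C(2n−1, n−1) ). -/
open Finset

/-- Central binomial sum: `∑_{j=0}^{m} C(m,j)^2 = C(2m, m)`. -/
lemma sum_choose_sq (m : ℕ) :
    ∑ j ∈ range (m + 1), m.choose j * m.choose j = (2 * m).choose m := by
  have h := Nat.add_choose_eq m m m
  rw [Finset.Nat.sum_antidiagonal_eq_sum_range_succ_mk] at h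
  rw [two_mul, h]
  refine Finset.sum_congr rfl fun j hj => ?_
  simp only []
  rw [Nat.choose_symm (Nat.lt_succ_iff.mp (mem_range.mp hj))]

theorem nat_key (n : ℕ) (hn : 1 ≤ n) :
    n + ∑ i ∈ Finset.Icc 2 n, i * n.choose i * (n - 1).choose (i - 1)
      = n * (2 * (n - 1)).choose (n - 1) := by
  have h1 : Finset.Icc 1 n = insert 1 (Finset.Icc 2 n) := by
    ext x; simp only [Finset.mem_Icc, Finset.mem_insert]; omega
  have hsum : ∑ i ∈ Finset.Icc 1 n, i * n.choose i * (n - 1).choose (i - 1)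
      = n + ∑ i ∈ Finset.Icc 2 n, i * n.choose i * (n - 1).choose (i - 1) := by
    rw [h1, Finset.sum_insert (by simp)]
    simp
  have step : ∀ i ∈ Finset.Icc 1 n, i * n.choose i * (n - 1).choose (i - 1)
      = n * ((n - 1).choose (i - 1) * (n - 1).choose (i - 1)) := by
    intro i hi
    obtain ⟨h1i, h2i⟩ := Finset.mem_Icc.mp hi
    obtain ⟨j, rfl⟩ : ∃ j, i = j + 1 := ⟨i - 1, by omega⟩
    obtain ⟨m, rfl⟩ : ∃ m, n = m + 1 := ⟨n - 1, by omega⟩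
    simp only [Nat.add_sub_cancel]
    have := Nat.add_one_mul_choose_eq m j
    calc (j + 1) * (m + 1).choose (j + 1) * m.choose j
        = ((m + 1).choose (j + 1) * (j + 1)) * m.choose j := by ring
      _ = ((m + 1) * m.choose j) * m.choose j := by rw [← this]
      _ = (m + 1) * (m.choose j * m.choose j) := by ring
  rw [← hsum, Finset.sum_congr rfl step, ← Finset.mul_sum]
  congr 1
  have hIco : Finset.Icc 1 n = Finset.Ico 1 (n + 1) := by
    ext x; simp only [Finset.mem_Icc, Finset.mem_Ico]; omega
  rw [hIco, Finset.sum_Ico_eq_sum_range]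
  simp only [Nat.add_sub_cancel, Nat.add_sub_cancel_left]
  have := sum_choose_sq (n - 1)
  rw [show n - 1 + 1 = n by omega] at this
  exact this

/-- For every `n ≥ 3`, the mean squared linking number
`M(n) = (∑_{i=2}^{n} (i/6) · C(n,i) · C(n-1,i-1)) / C(2n-1, n-1)` of two disjoint monotonic
`n`-cycles over all pairs of such cycles across all random book embeddings of `K_{2n}`
satisfies `M(n) = (n/6) · (n/(2n-1) - 1/C(2n-1, n-1))`. -/
theorem mean_squared_linking_closed_form (n : ℕ) (hn : 3 ≤ n) :
    (∑ i ∈ Finset.Icc 2 n,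
        ((i : ℚ) / 6) * n.choose i * (n - 1).choose (i - 1)) / (2 * n - 1).choose (n - 1)
      = ((n : ℚ) / 6) *
        ((n : ℚ) / (2 * (n : ℚ) - 1) - 1 / (2 * n - 1).choose (n - 1)) := by
  have hn1 : 1 ≤ n := by omega
  have hApos : 0 < (2 * n - 1).choose (n - 1) := Nat.choose_pos (by omega)
  have hA : ((2 * n - 1).choose (n - 1) : ℚ) ≠ 0 := by positivity
  have h2n1 : 2 * (n : ℚ) - 1 ≠ 0 := by
    have : (3 : ℚ) ≤ (n : ℚ) := by exact_mod_cast hn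
    nlinarith
  -- key choose identity
  have hkey : n * (2 * n - 1).choose (n - 1) = (2 * n - 1) * (2 * (n - 1)).choose (n - 1) := by
    have h := Nat.add_one_mul_choose_eq (2 * (n - 1)) (n - 1)
    rw [show 2 * (n - 1) + 1 = 2 * n - 1 by omega, show n - 1 + 1 = n by omega] at h
    have hsymm : (2 * n - 1).choose n = (2 * n - 1).choose (n - 1) := by
      rw [← Nat.choose_symm (by omega : n ≤ 2 * n - 1), show 2 * n - 1 - n = n - 1 by omega]
    rw [hsymm] at h
    exact (Nat.mul_comm n _).trans h.symm
  have hkeyQ : (n : ℚ) * (2 * n - 1).choose (n - 1)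
      = (2 * (n : ℚ) - 1) * (2 * (n - 1)).choose (n - 1) := by
    have := congrArg (Nat.cast : ℕ → ℚ) hkey
    push_cast [Nat.cast_sub (by omega : 1 ≤ 2 * n)] at this
    convert this using 2
  have hk := nat_key n hn1
  have hkQ : (n : ℚ) + ∑ i ∈ Finset.Icc 2 n, (i : ℚ) * n.choose i * (n - 1).choose (i - 1)
      = (n : ℚ) * (2 * (n - 1)).choose (n - 1) := by
    have := congrArg (Nat.cast : ℕ → ℚ) hk
    push_cast at this
    convert this using 2
  have hsum6 : ∑ i ∈ Finset.Icc 2 n, ((i : ℚ) / 6) * n.choose i * (n - 1).choose (i - 1)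
      = (∑ i ∈ Finset.Icc 2 n, (i : ℚ) * n.choose i * (n - 1).choose (i - 1)) / 6 := by
    rw [Finset.sum_div]
    exact Finset.sum_congr rfl fun i _ => by ring
  rw [hsum6]
  have hS : ∑ i ∈ Finset.Icc 2 n, (i : ℚ) * n.choose i * (n - 1).choose (i - 1)
      = (n : ℚ) * (2 * (n - 1)).choose (n - 1) - n := by linarith
  rw [hS]
  field_simp
  have hC : (n : ℚ) * ((2 * n - 1).choose (n - 1) : ℚ) / ((n : ℚ) * 2 - 1)
      = ((2 * (n - 1)).choose (n - 1) : ℚ) := by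
    rw [div_eq_iff (by rw [mul_comm]; exact h2n1)]
    linear_combination hkeyQ
  rw [hC]
end

section
/- Let i be a natural number and let x be a real number with |x| < 1. Then the function t ↦ (1−i)/t + (1 − exp((t−1)·x) + (t−1)·x·exp((t−1)·x)) / ((t−1)·(t − exp((t−1)·x))) tends to (1−i) + x²/(2(1−x)) as t tends to 1 with t ≠ 1 (limit along the punctured neighborhood filter 𝓝[≠] 1). -/
open Filter Real


lemma aux_deriv (x : ℝ) (s : ℝ) :
    HasDerivAt (fun s : ℝ => 1 - Real.exp (s * x) + s * x * Real.exp (s * x))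
      (s * x ^ 2 * Real.exp (s * x)) s := by
  have he : HasDerivAt (fun s : ℝ => Real.exp (s * x)) (Real.exp (s * x) * x) s :=
    (hasDerivAt_mul_const x).exp
  have h1 : HasDerivAt (fun s : ℝ => 1 - Real.exp (s * x)) (-(Real.exp (s * x) * x)) s :=
    he.const_sub 1
  have h2 : HasDerivAt (fun s : ℝ => s * x * Real.exp (s * x))
      (x * Real.exp (s * x) + s * x * (Real.exp (s * x) * x)) s :=
    ((hasDerivAt_mul_const x).mul he)
  have := h1.add h2
  convert this using 1
  exacts [rfl, rfl, rfl, by ring]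

lemma aux_A (x : ℝ) :
    Tendsto (fun s : ℝ => (1 - Real.exp (s * x) + s * x * Real.exp (s * x)) / s ^ 2)
      (nhdsWithin 0 {(0:ℝ)}ᶜ) (nhds (x ^ 2 / 2)) := by
  apply HasDerivAt.lhopital_zero_nhdsNE (f' := fun s => s * x ^ 2 * Real.exp (s * x))
    (g' := fun s => 2 * s)
  · exact Eventually.of_forall fun s => aux_deriv x s
  · exact Eventually.of_forall fun s => by simpa using (hasDerivAt_pow 2 s)
  · filter_upwards [self_mem_nhdsWithin] with s hs
    simpa using hs
  · have : ContinuousAt (fun s : ℝ => 1 - Real.exp (s * x) + s * x * Real.exp (s * x)) 0 := by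
      fun_prop
    have h := this.tendsto.mono_left (nhdsWithin_le_nhds (s := {(0:ℝ)}ᶜ))
    simpa using h
  · have h := ((continuous_pow 2).continuousAt (x := (0:ℝ))).tendsto.mono_left
      (nhdsWithin_le_nhds (s := {(0:ℝ)}ᶜ))
    simpa using h
  · apply Tendsto.congr' (f₁ := fun s : ℝ => x ^ 2 * Real.exp (s * x) / 2)
    · filter_upwards [self_mem_nhdsWithin] with s hs
      have hs' : s ≠ 0 := hs
      field_simp
    · have : ContinuousAt (fun s : ℝ => x ^ 2 * Real.exp (s * x) / 2) 0 := by fun_prop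
      have h := this.tendsto.mono_left (nhdsWithin_le_nhds (s := {(0:ℝ)}ᶜ))
      simpa using h

lemma aux_B (x : ℝ) :
    Tendsto (fun s : ℝ => (s + 1 - Real.exp (s * x)) / s)
      (nhdsWithin 0 {(0:ℝ)}ᶜ) (nhds (1 - x)) := by
  have he : HasDerivAt (fun s : ℝ => Real.exp (s * x)) x 0 := by
    simpa using (hasDerivAt_mul_const x (x := (0:ℝ))).exp
  have hs := hasDerivAt_iff_tendsto_slope.mp he
  have hC : Tendsto (fun s : ℝ => (Real.exp (s * x) - 1) / s)
      (nhdsWithin 0 {(0:ℝ)}ᶜ) (nhds x) := by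
    apply hs.congr
    intro s
    simp [slope_def_field, div_eq_div_iff]
  have := (tendsto_const_nhds (x := (1:ℝ))).sub hC
  apply Tendsto.congr' _ this
  filter_upwards [self_mem_nhdsWithin] with s hs'
  have : (s:ℝ) ≠ 0 := hs'
  field_simp
  ring

lemma aux_sub : Tendsto (fun t : ℝ => t - 1) (nhdsWithin 1 {(1:ℝ)}ᶜ)
    (nhdsWithin 0 {(0:ℝ)}ᶜ) := by
  rw [tendsto_nhdsWithin_iff]
  constructor
  · have : Tendsto (fun t : ℝ => t - 1) (nhds 1) (nhds 0) := by
      have := (continuous_sub_right (1:ℝ)).tendsto 1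
      simpa using this
    exact this.mono_left nhdsWithin_le_nhds
  · filter_upwards [self_mem_nhdsWithin] with t ht
    exact sub_ne_zero_of_ne ht

lemma aux_main (x : ℝ) (hx : |x| < 1) :
    Tendsto (fun s : ℝ =>
        (1 - Real.exp (s * x) + s * x * Real.exp (s * x)) /
          (s * (s + 1 - Real.exp (s * x))))
      (nhdsWithin 0 {(0:ℝ)}ᶜ) (nhds (x ^ 2 / (2 * (1 - x)))) := by
  have hx1 : (1:ℝ) - x ≠ 0 := by
    have := (abs_lt.mp hx).2
    intro h; linarith
  have hdiv := (aux_A x).div (aux_B x) hx1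
  have heq : x ^ 2 / 2 / (1 - x) = x ^ 2 / (2 * (1 - x)) := by
    rw [div_div]
  rw [heq] at hdiv
  apply hdiv.congr'
  filter_upwards [self_mem_nhdsWithin] with s hs
  have hs' : (s:ℝ) ≠ 0 := hs
  simp only [Pi.div_apply]
  rw [div_div_div_comm, sq, mul_div_assoc, div_self hs', mul_one, div_div]
  ring_nf

/-- For `i : ℕ` and `|x| < 1`, the logarithmic derivative of the exponential generating
function of the Eulerian numbers,
`t ↦ (1-i)/t + (1 - e^{(t-1)x} + (t-1)·x·e^{(t-1)x}) / ((t-1)(t - e^{(t-1)x}))`,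
tends to `(1-i) + x²/(2(1-x))` as `t → 1`, `t ≠ 1`. -/
theorem log_deriv_egf_tendsto_at_one (i : ℕ) (x : ℝ) (hx : |x| < 1) :
    Tendsto (fun t : ℝ =>
        (1 - (i : ℝ)) / t +
          (1 - Real.exp ((t - 1) * x) + (t - 1) * x * Real.exp ((t - 1) * x)) /
            ((t - 1) * (t - Real.exp ((t - 1) * x))))
      (nhdsWithin 1 {(1 : ℝ)}ᶜ)
      (nhds ((1 - (i : ℝ)) + x ^ 2 / (2 * (1 - x)))) := by
  have h1 : Tendsto (fun t : ℝ => (1 - (i:ℝ)) / t) (nhdsWithin 1 {(1:ℝ)}ᶜ)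
      (nhds (1 - (i:ℝ))) := by
    have : ContinuousAt (fun t : ℝ => (1 - (i:ℝ)) / t) 1 := by
      apply ContinuousAt.div continuousAt_const continuousAt_id one_ne_zero
    have h := this.tendsto.mono_left (nhdsWithin_le_nhds (s := {(1:ℝ)}ᶜ))
    simpa using h
  have h2 := (aux_main x hx).comp aux_sub
  refine h1.add (h2.congr fun t => ?_)
  simp only [Function.comp]
  ring_nf
end
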